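/- Let T be a theory containing HA and X a set of HA-sentences. If PA + X is EΠ_{k+1}-conservative over T + X, then PA + X is U_{k+1}-conservative over T + X. -/
import Mathlib


namespace SemiClassicalArith

/-- Terms of arithmetic: variables (de Bruijn indices) and function symbols
(one symbol of each arity for every code, covering all primitive recursive functions). -/
inductive Term : Type
  | var : ℕ → Term
  | func : (code : ℕ) → (arity : ℕ) → (Fin arity → Term) → Term

namespace Term

/-- Shift all variables `≥ d` up by one. -/
def lift (d : ℕ) : Term → Term
  | var n => if n < d then var n else var (n + 1)
  | func c a ts => func c a fun i => (ts i).lift d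

/-- Binder-removing substitution of `s` for variable `k`. -/
def subst (k : ℕ) (s : Term) : Term → Term
  | var n => if n < k then var n else if n = k then s else var (n - 1)
  | func c a ts => func c a fun i => Term.subst k s (ts i)

/-- In-place replacement of variable `k` by `s` (no shifting of other variables). -/
def repl (k : ℕ) (s : Term) : Term → Term
  | var n => if n = k then s else var n
  | func c a ts => func c a fun i => Term.repl k s (ts i)

/-- Free variables of a term. -/
def fv : Term → Finset ℕ
  | var n => {n}
  | func _ _ ts => Finset.univ.sup fun i => (ts i).fv

/-- The constant zero (function symbol of arity 0, code 0). -/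
def zero : Term := func 0 0 (fun i => i.elim0)

/-- Successor (function symbol of arity 1, code 1). -/
def succ (t : Term) : Term := func 1 1 (fun _ => t)

end Term

/-- Formulas of arithmetic in the language with an extra nullary predicate
symbol `$` (`dollar`), used as a place holder. Quantifiers use de Bruijn indices. -/
inductive Formula : Type
  | falsum : Formula
  | dollar : Formula
  | eq : Term → Term → Formula
  | and : Formula → Formula → Formula
  | or : Formula → Formula → Formula
  | imp : Formula → Formula → Formula
  | all : Formula → Formula
  | ex : Formula → Formula

namespace Formula

def neg (φ : Formula) : Formula := φ.imp falsum

def iff (φ ψ : Formula) : Formula := (φ.imp ψ).and (ψ.imp φ)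

/-- `¬_$ φ`, i.e. `φ → $`. -/
def negD (φ : Formula) : Formula := φ.imp dollar

def lift (d : ℕ) : Formula → Formula
  | falsum => falsum
  | dollar => dollar
  | eq t u => eq (t.lift d) (u.lift d)
  | and φ ψ => and (φ.lift d) (ψ.lift d)
  | or φ ψ => or (φ.lift d) (ψ.lift d)
  | imp φ ψ => imp (φ.lift d) (ψ.lift d)
  | all φ => all (φ.lift (d + 1))
  | ex φ => ex (φ.lift (d + 1))

/-- Binder-removing substitution of term `s` for variable `k`. -/
def subst (k : ℕ) (s : Term) : Formula → Formula
  | falsum => falsum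
  | dollar => dollar
  | eq t u => eq (Term.subst k s t) (Term.subst k s u)
  | and φ ψ => and (Formula.subst k s φ) (Formula.subst k s ψ)
  | or φ ψ => or (Formula.subst k s φ) (Formula.subst k s ψ)
  | imp φ ψ => imp (Formula.subst k s φ) (Formula.subst k s ψ)
  | all φ => all (Formula.subst (k + 1) (s.lift 0) φ)
  | ex φ => ex (Formula.subst (k + 1) (s.lift 0) φ)

/-- In-place replacement of variable `k` by term `s`. -/
def repl (k : ℕ) (s : Term) : Formula → Formula
  | falsum => falsum
  | dollar => dollar
  | eq t u => eq (Term.repl k s t) (Term.repl k s u)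
  | and φ ψ => and (Formula.repl k s φ) (Formula.repl k s ψ)
  | or φ ψ => or (Formula.repl k s φ) (Formula.repl k s ψ)
  | imp φ ψ => imp (Formula.repl k s φ) (Formula.repl k s ψ)
  | all φ => all (Formula.repl (k + 1) (s.lift 0) φ)
  | ex φ => ex (Formula.repl (k + 1) (s.lift 0) φ)

/-- Free variables of a formula. -/
def fv : Formula → Finset ℕ
  | falsum => ∅
  | dollar => ∅
  | eq t u => t.fv ∪ u.fv
  | and φ ψ => φ.fv ∪ ψ.fv
  | or φ ψ => φ.fv ∪ ψ.fv
  | imp φ ψ => φ.fv ∪ ψ.fv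
  | all φ => (φ.fv.erase 0).image (· - 1)
  | ex φ => (φ.fv.erase 0).image (· - 1)

/-- A sentence is a formula with no free variables. -/
def sentence (φ : Formula) : Prop := φ.fv = ∅

/-- The formula is in the language of `HA` (the placeholder `$` does not occur). -/
def noDollar : Formula → Prop
  | falsum => True
  | dollar => False
  | eq _ _ => True
  | and φ ψ => φ.noDollar ∧ ψ.noDollar
  | or φ ψ => φ.noDollar ∧ ψ.noDollar
  | imp φ ψ => φ.noDollar ∧ ψ.noDollar
  | all φ => φ.noDollar
  | ex φ => φ.noDollar

/-- Quantifier-free formula of `HA`. -/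
def isQF : Formula → Prop
  | falsum => True
  | dollar => False
  | eq _ _ => True
  | and φ ψ => φ.isQF ∧ ψ.isQF
  | or φ ψ => φ.isQF ∧ ψ.isQF
  | imp φ ψ => φ.isQF ∧ ψ.isQF
  | all _ => False
  | ex _ => False

/-- Flip `+`/`-` in an alternation path (`true` = `+`, `false` = `-`). -/
def pflip (s : List Bool) : List Bool := s.map (!·)

/-- The set of alternation paths of a formula (Akama–Berardi–Hayashi–Kohlenbach). -/
def alt : Formula → Finset (List Bool)
  | falsum => {([] : List Bool)}
  | dollar => {([] : List Bool)}
  | eq _ _ => {([] : List Bool)}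
  | and φ ψ => φ.alt ∪ ψ.alt
  | or φ ψ => φ.alt ∪ ψ.alt
  | imp φ ψ => φ.alt.image pflip ∪ ψ.alt
  | all φ => φ.alt.image (fun s => if s.head? = some false then s else false :: s)
  | ex φ => φ.alt.image (fun s => if s.head? = some true then s else true :: s)

/-- The degree of a formula: the maximal length of its alternation paths. -/
def degree (φ : Formula) : ℕ := φ.alt.sup List.length

/-- The class `U_k` (for `k ≥ 1`: degree `k` and all maximal paths begin with `-`;
`U_0` is the class of degree-`0` formulas). -/
def inU (k : ℕ) (φ : Formula) : Prop :=
  φ.degree = k ∧ ∀ s ∈ φ.alt, s.length = k → k = 0 ∨ s.head? = some false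

/-- The class `E_k` (for `k ≥ 1`: degree `k` and all maximal paths begin with `+`;
`E_0` is the class of degree-`0` formulas). -/
def inE (k : ℕ) (φ : Formula) : Prop :=
  φ.degree = k ∧ ∀ s ∈ φ.alt, s.length = k → k = 0 ∨ s.head? = some true

/-- The dual of a prenex formula: swap quantifiers and negate the matrix. -/
def dual : Formula → Formula
  | all φ => ex φ.dual
  | ex φ => all φ.dual
  | φ => φ.neg

/-- The `$`-translation (Ishihara's generalized negative translation). -/
def dollarTr : Formula → Formula
  | falsum => dollar
  | dollar => dollar
  | eq t u => (eq t u).negD.negD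
  | and φ ψ => and φ.dollarTr ψ.dollarTr
  | or φ ψ => (or φ.dollarTr ψ.dollarTr).negD.negD
  | imp φ ψ => imp φ.dollarTr ψ.dollarTr
  | all φ => all φ.dollarTr
  | ex φ => (ex φ.dollarTr).negD.negD

/-- The Friedman A-translation: replace every prime formula `P` (including `⊥`)
by `P ∨ *` (here `*` is the placeholder `dollar`). -/
def aTr : Formula → Formula
  | falsum => or falsum dollar
  | dollar => dollar
  | eq t u => or (eq t u) dollar
  | and φ ψ => and φ.aTr ψ.aTr
  | or φ ψ => or φ.aTr ψ.aTr
  | imp φ ψ => imp φ.aTr ψ.aTr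
  | all φ => all φ.aTr
  | ex φ => ex φ.aTr

/-- Prefix `n` universal quantifiers. -/
def allN : Formula → ℕ → Formula
  | φ, 0 => φ
  | φ, n + 1 => Formula.allN φ.all n

/-- The universal closure of a formula. -/
def univClosure (φ : Formula) : Formula := φ.allN (φ.fv.sup Nat.succ)

end Formula

mutual
  /-- The class `Σ_k` of prenex formulas. -/
  inductive IsSigma : ℕ → Formula → Prop
    | qf {φ : Formula} : φ.isQF → IsSigma 0 φ
    | ofPi {k : ℕ} {φ : Formula} : IsPi k φ → IsSigma (k + 1) φ
    | ex {k : ℕ} {φ : Formula} : IsSigma (k + 1) φ → IsSigma (k + 1) φ.ex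
  /-- The class `Π_k` of prenex formulas. -/
  inductive IsPi : ℕ → Formula → Prop
    | qf {φ : Formula} : φ.isQF → IsPi 0 φ
    | ofSigma {k : ℕ} {φ : Formula} : IsSigma k φ → IsPi (k + 1) φ
    | all {k : ℕ} {φ : Formula} : IsPi (k + 1) φ → IsPi (k + 1) φ.all
end

/-- Axioms of Heyting arithmetic `HA` (Hilbert style intuitionistic predicate logic
with equality, plus arithmetical axioms and the induction scheme). -/
inductive HAAx : Formula → Prop
  | axK (φ ψ : Formula) : HAAx (φ.imp (ψ.imp φ))
  | axS (φ ψ χ : Formula) : HAAx ((φ.imp (ψ.imp χ)).imp ((φ.imp ψ).imp (φ.imp χ)))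
  | andI (φ ψ : Formula) : HAAx (φ.imp (ψ.imp (φ.and ψ)))
  | andE1 (φ ψ : Formula) : HAAx ((φ.and ψ).imp φ)
  | andE2 (φ ψ : Formula) : HAAx ((φ.and ψ).imp ψ)
  | orI1 (φ ψ : Formula) : HAAx (φ.imp (φ.or ψ))
  | orI2 (φ ψ : Formula) : HAAx (ψ.imp (φ.or ψ))
  | orE (φ ψ χ : Formula) : HAAx ((φ.imp χ).imp ((ψ.imp χ).imp ((φ.or ψ).imp χ)))
  | efq (φ : Formula) : HAAx (Formula.falsum.imp φ)
  | allE (φ : Formula) (t : Term) : HAAx (φ.all.imp (φ.subst 0 t))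
  | exI (φ : Formula) (t : Term) : HAAx ((φ.subst 0 t).imp φ.ex)
  | allK (φ ψ : Formula) : HAAx ((φ.imp ψ).all.imp (φ.all.imp ψ.all))
  | allVac (φ : Formula) : HAAx (φ.imp (φ.lift 0).all)
  | exE (φ ψ : Formula) : HAAx ((φ.imp (ψ.lift 0)).all.imp (φ.ex.imp ψ))
  | eqRefl (t : Term) : HAAx (Formula.eq t t)
  | eqSubst (t u : Term) (φ : Formula) : HAAx ((Formula.eq t u).imp ((φ.subst 0 t).imp (φ.subst 0 u)))
  | succNeZero (t : Term) : HAAx (Formula.neg (Formula.eq (Term.succ t) Term.zero))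
  | succInj (t u : Term) : HAAx ((Formula.eq (Term.succ t) (Term.succ u)).imp (Formula.eq t u))
  | ind (φ : Formula) : HAAx ((φ.subst 0 Term.zero).imp
      ((((φ.imp (φ.repl 0 (Term.succ (Term.var 0))))).all).imp φ.all))
  | atomDec (t u : Term) : HAAx ((Formula.eq t u).or (Formula.eq t u).neg)

/-- Provability from `HA` (in the language possibly containing `$`)
together with the extra axioms `T`. -/
inductive Proves (T : Set Formula) : Formula → Prop
  | ax {φ : Formula} : φ ∈ T → Proves T φ
  | ha {φ : Formula} : HAAx φ → Proves T φ
  | mp {φ ψ : Formula} : Proves T (φ.imp ψ) → Proves T φ → Proves T ψ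
  | gen {φ : Formula} : Proves T φ → Proves T φ.all

/-- The scheme `Σ_k-LEM`. -/
def sigLEM (k : ℕ) : Set Formula := {ψ | ∃ φ : Formula, IsSigma k φ ∧ ψ = φ.or φ.neg}

/-- The full law of excluded middle for `HA`-formulas; `Proves lemSet` is `PA`-provability. -/
def lemSet : Set Formula := {ψ | ∃ φ : Formula, φ.noDollar ∧ ψ = φ.or φ.neg}

/-- The scheme `F_k-LEM`: excluded middle for `HA`-formulas of degree at most `k`. -/
def fLEM (k : ℕ) : Set Formula :=
  {ψ | ∃ φ : Formula, φ.noDollar ∧ φ.degree ≤ k ∧ ψ = φ.or φ.neg}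

/-- `T` is (the set of extra axioms of) a semi-classical arithmetic:
`HA ⊆ HA + T ⊆ PA`, i.e. all axioms are `HA`-formulas provable in `PA`. -/
def IsSemiClassical (T : Set Formula) : Prop :=
  ∀ φ ∈ T, φ.noDollar ∧ Proves lemSet φ

mutual
  /-- The class `ℛ_{k+1}` (index `k` denotes `ℛ_{k+1}`). -/
  inductive Rcl : ℕ → Formula → Prop
    | base {k : ℕ} {φ : Formula} : φ.degree ≤ k → φ.noDollar → Rcl k φ
    | and {k : ℕ} {φ ψ : Formula} : Rcl k φ → Rcl k ψ → Rcl k (φ.and ψ)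
    | or {k : ℕ} {φ ψ : Formula} : Rcl k φ → Rcl k ψ → Rcl k (φ.or ψ)
    | all {k : ℕ} {φ : Formula} : Rcl k φ → Rcl k φ.all
    | imp {k : ℕ} {φ ψ : Formula} : Jcl k φ → Rcl k ψ → Rcl k (φ.imp ψ)
  /-- The class `𝒥_{k+1}` (index `k` denotes `𝒥_{k+1}`). -/
  inductive Jcl : ℕ → Formula → Prop
    | base {k : ℕ} {φ : Formula} : φ.degree ≤ k → φ.noDollar → Jcl k φ
    | and {k : ℕ} {φ ψ : Formula} : Jcl k φ → Jcl k ψ → Jcl k (φ.and ψ)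
    | or {k : ℕ} {φ ψ : Formula} : Jcl k φ → Jcl k ψ → Jcl k (φ.or ψ)
    | ex {k : ℕ} {φ : Formula} : Jcl k φ → Jcl k φ.ex
    | imp {k : ℕ} {φ ψ : Formula} : Rcl k φ → Jcl k ψ → Jcl k (φ.imp ψ)
end

/-- The class `𝒬_{k+1}` (index `k` denotes `𝒬_{k+1}`): generated from prime formulas by
`∧, ∨, ∀, ∃` and implications `J → Q` with `J ∈ 𝒥_{k+1}`. -/
inductive Qcl : ℕ → Formula → Prop
  | falsum {k : ℕ} : Qcl k Formula.falsum
  | eq {k : ℕ} {t u : Term} : Qcl k (Formula.eq t u)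
  | and {k : ℕ} {φ ψ : Formula} : Qcl k φ → Qcl k ψ → Qcl k (φ.and ψ)
  | or {k : ℕ} {φ ψ : Formula} : Qcl k φ → Qcl k ψ → Qcl k (φ.or ψ)
  | all {k : ℕ} {φ : Formula} : Qcl k φ → Qcl k φ.all
  | ex {k : ℕ} {φ : Formula} : Qcl k φ → Qcl k φ.ex
  | imp {k : ℕ} {φ ψ : Formula} : Jcl k φ → Qcl k ψ → Qcl k (φ.imp ψ)

/-- The class `𝒱_{k+1}` (index `k` denotes `𝒱_{k+1}`): generated from `𝒥_{k+1}` by `∧, ∀`. -/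
inductive Vcl : ℕ → Formula → Prop
  | ofJ {k : ℕ} {φ : Formula} : Jcl k φ → Vcl k φ
  | and {k : ℕ} {φ ψ : Formula} : Vcl k φ → Vcl k ψ → Vcl k (φ.and ψ)
  | all {k : ℕ} {φ : Formula} : Vcl k φ → Vcl k φ.all

/-- The class `EΠ_k`: generated from `Π_k` formulas by `∨` and `∀`. -/
inductive EPi (k : ℕ) : Formula → Prop
  | ofPi {φ : Formula} : IsPi k φ → EPi k φ
  | or {φ ψ : Formula} : EPi k φ → EPi k ψ → EPi k (φ.or ψ)
  | all {φ : Formula} : EPi k φ → EPi k φ.all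

/-- The class `EΣ_{k+1}` (index `k` denotes `EΣ_{k+1}`): existential quantifications
of `EΠ_k` formulas. -/
inductive ESig (k : ℕ) : Formula → Prop
  | ofEPi {φ : Formula} : EPi k φ → ESig k φ
  | ex {φ : Formula} : ESig k φ → ESig k φ.ex

/-- The scheme `Γ-DNEC`: universal closure of `¬¬φ` implies universal closure of `φ`. -/
def dnecSet (Γ : Set Formula) : Set Formula :=
  {ψ | ∃ φ ∈ Γ, ψ = (φ.neg.neg.univClosure).imp φ.univClosure}

/-- The scheme `Γ-DNSC`: universal closure of `¬¬φ` implies `¬¬` of the universal closure. -/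
def dnscSet (Γ : Set Formula) : Set Formula :=
  {ψ | ∃ φ ∈ Γ, ψ = (φ.neg.neg.univClosure).imp φ.univClosure.neg.neg}

/-- Double-negation elimination for sentences in `Γ`. -/
def dneSentSet (Γ : Set Formula) : Set Formula :=
  {ψ | ∃ φ ∈ Γ, φ.sentence ∧ ψ = φ.neg.neg.imp φ}


/-! ### Auxiliary development -/

namespace Term

theorem subst_lift (t : Term) : ∀ (u : Term) (k : ℕ), Term.subst k t (u.lift k) = u := by
  intro u
  induction u with
  | var n =>
      intro k
      by_cases h : n < k
      · simp [lift, subst, h]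
      · have h1 : ¬ n + 1 < k := by omega
        have h2 : ¬ n + 1 = k := by omega
        simp [lift, subst, h, h1, h2]
  | func c a ts ih =>
      intro k
      simp only [lift, subst]
      congr 1
      funext i
      exact ih i k

theorem subst_lift_var : ∀ (u : Term) (k : ℕ), Term.subst k (Term.var k) (u.lift (k+1)) = u := by
  intro u
  induction u with
  | var n =>
      intro k
      by_cases h : n < k + 1
      · by_cases h2 : n < k
        · simp [lift, subst, h, h2]
        · have h3 : n = k := by omega
          simp [lift, subst, h, h2, h3]
      · have h1 : ¬ n + 1 < k := by omega
        have h2 : ¬ n + 1 = k := by omega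
        simp [lift, subst, h, h1, h2]
  | func c a ts ih =>
      intro k
      simp only [lift, subst]
      congr 1
      funext i
      exact ih i k

theorem lift_var_zero (k : ℕ) : (Term.var k).lift 0 = Term.var (k+1) := by
  simp [lift]

end Term

namespace Formula

theorem subst_lift (φ : Formula) : ∀ (k : ℕ) (t : Term), Formula.subst k t (φ.lift k) = φ := by
  induction φ with
  | falsum => intro k t; rfl
  | dollar => intro k t; rfl
  | eq a b => intro k t; simp [lift, subst, Term.subst_lift]
  | and φ ψ ih1 ih2 => intro k t; simp [lift, subst, ih1, ih2]
  | or φ ψ ih1 ih2 => intro k t; simp [lift, subst, ih1, ih2]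
  | imp φ ψ ih1 ih2 => intro k t; simp [lift, subst, ih1, ih2]
  | all φ ih => intro k t; simp [lift, subst, ih]
  | ex φ ih => intro k t; simp [lift, subst, ih]

theorem subst_lift_var (φ : Formula) : ∀ (k : ℕ), Formula.subst k (Term.var k) (φ.lift (k+1)) = φ := by
  induction φ with
  | falsum => intro k; rfl
  | dollar => intro k; rfl
  | eq a b => intro k; simp [lift, subst, Term.subst_lift_var]
  | and φ ψ ih1 ih2 => intro k; simp [lift, subst, ih1, ih2]
  | or φ ψ ih1 ih2 => intro k; simp [lift, subst, ih1, ih2]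
  | imp φ ψ ih1 ih2 => intro k; simp [lift, subst, ih1, ih2]
  | all φ ih => intro k; simp [lift, subst, Term.lift_var_zero, ih]
  | ex φ ih => intro k; simp [lift, subst, Term.lift_var_zero, ih]

/-- A formula size which is invariant under lifting. -/
def fsize : Formula → ℕ
  | falsum => 1
  | dollar => 1
  | eq _ _ => 1
  | and φ ψ => fsize φ + fsize ψ + 1
  | or φ ψ => fsize φ + fsize ψ + 1
  | imp φ ψ => fsize φ + fsize ψ + 1
  | all φ => fsize φ + 1
  | ex φ => fsize φ + 1

theorem fsize_lift : ∀ (φ : Formula) (d : ℕ), fsize (φ.lift d) = fsize φ := by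
  intro φ
  induction φ <;> intro d <;> simp [lift, fsize, *]

theorem fsize_pos : ∀ (φ : Formula), 0 < fsize φ := by
  intro φ; cases φ <;> simp [fsize]

theorem noDollar_lift : ∀ (φ : Formula) (d : ℕ), φ.noDollar → (φ.lift d).noDollar := by
  intro φ
  induction φ <;> intro d h <;>
    simp [lift, noDollar] at * <;>
    aesop

theorem isQF_lift : ∀ (φ : Formula) (d : ℕ), φ.isQF → (φ.lift d).isQF := by
  intro φ
  induction φ <;> intro d h <;>
    simp [lift, isQF] at * <;>
    aesop

theorem noDollar_neg {φ : Formula} (h : φ.noDollar) : φ.neg.noDollar := ⟨h, trivial⟩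

theorem isQF_neg {φ : Formula} (h : φ.isQF) : φ.neg.isQF := ⟨h, trivial⟩

theorem dual_of_qf {φ : Formula} (h : φ.isQF) : φ.dual = φ.neg := by
  cases φ <;> first | rfl | exact absurd h (by simp [isQF])

theorem dual_lift : ∀ (φ : Formula) (d : ℕ), (φ.lift d).dual = φ.dual.lift d := by
  intro φ
  induction φ <;> intro d <;> simp [lift, dual, neg, *]

theorem noDollar_dual : ∀ (φ : Formula), φ.noDollar → φ.dual.noDollar := by
  intro φ
  induction φ <;> intro h <;> simp [dual, noDollar, neg] at * <;> aesop

end Formula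

/-! ### Class lemmas for `IsSigma` / `IsPi` -/

theorem isQF_isSigma_isPi : ∀ (j : ℕ),
    (∀ φ : Formula, φ.isQF → IsSigma j φ) ∧ (∀ φ : Formula, φ.isQF → IsPi j φ) := by
  intro j
  induction j with
  | zero => exact ⟨fun _ h => .qf h, fun _ h => .qf h⟩
  | succ j ih => exact ⟨fun φ h => .ofPi (ih.2 φ h), fun φ h => .ofSigma (ih.1 φ h)⟩

theorem isQF_isSigma {φ : Formula} {j : ℕ} (h : φ.isQF) : IsSigma j φ :=
  (isQF_isSigma_isPi j).1 φ h

theorem isQF_isPi {φ : Formula} {j : ℕ} (h : φ.isQF) : IsPi j φ :=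
  (isQF_isSigma_isPi j).2 φ h

theorem sigma_pi_succ : ∀ (m : ℕ),
    (∀ φ : Formula, IsSigma m φ → IsSigma (m+1) φ) ∧
    (∀ φ : Formula, IsPi m φ → IsPi (m+1) φ) := by
  intro m
  induction m with
  | zero =>
      refine ⟨fun φ h => ?_, fun φ h => ?_⟩
      · cases h with | qf h => exact isQF_isSigma h
      · cases h with | qf h => exact isQF_isPi h
  | succ m ih =>
      have keyS : ∀ (n : ℕ) (ψ : Formula), Formula.fsize ψ ≤ n →
          IsSigma (m+1) ψ → IsSigma (m+2) ψ := by
        intro n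
        induction n with
        | zero => intro ψ hs _; exact absurd hs (by have := Formula.fsize_pos ψ; omega)
        | succ n ihn =>
            intro ψ hs h
            cases h with
            | ofPi h => exact .ofPi (ih.2 _ h)
            | ex h =>
                refine .ex (ihn _ ?_ h)
                simp [Formula.fsize] at hs; omega
      have keyP : ∀ (n : ℕ) (ψ : Formula), Formula.fsize ψ ≤ n →
          IsPi (m+1) ψ → IsPi (m+2) ψ := by
        intro n
        induction n with
        | zero => intro ψ hs _; exact absurd hs (by have := Formula.fsize_pos ψ; omega)
        | succ n ihn =>
            intro ψ hs h
            cases h with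
            | ofSigma h => exact .ofSigma (ih.1 _ h)
            | all h =>
                refine .all (ihn _ ?_ h)
                simp [Formula.fsize] at hs; omega
      exact ⟨fun φ h => keyS _ φ le_rfl h, fun φ h => keyP _ φ le_rfl h⟩

theorem IsSigma.mono {φ : Formula} {m m' : ℕ} (h : IsSigma m φ) (hle : m ≤ m') : IsSigma m' φ := by
  induction hle with
  | refl => exact h
  | step _ ih => exact (sigma_pi_succ _).1 _ ih

theorem IsPi.mono {φ : Formula} {m m' : ℕ} (h : IsPi m φ) (hle : m ≤ m') : IsPi m' φ := by
  induction hle with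
  | refl => exact h
  | step _ ih => exact (sigma_pi_succ _).2 _ ih

theorem sigma_pi_lift : ∀ (m : ℕ),
    (∀ φ : Formula, IsSigma m φ → ∀ d, IsSigma m (φ.lift d)) ∧
    (∀ φ : Formula, IsPi m φ → ∀ d, IsPi m (φ.lift d)) := by
  intro m
  induction m with
  | zero =>
      refine ⟨fun φ h d => ?_, fun φ h d => ?_⟩
      · cases h with | qf h => exact .qf (Formula.isQF_lift φ d h)
      · cases h with | qf h => exact .qf (Formula.isQF_lift φ d h)
  | succ m ih =>
      have keyS : ∀ (n : ℕ) (ψ : Formula), Formula.fsize ψ ≤ n →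
          IsSigma (m+1) ψ → ∀ d, IsSigma (m+1) (ψ.lift d) := by
        intro n
        induction n with
        | zero => intro ψ hs _; exact absurd hs (by have := Formula.fsize_pos ψ; omega)
        | succ n ihn =>
            intro ψ hs h d
            cases h with
            | ofPi h => exact .ofPi (ih.2 _ h d)
            | ex h =>
                refine .ex (ihn _ ?_ h (d+1))
                simp [Formula.fsize] at hs; omega
      have keyP : ∀ (n : ℕ) (ψ : Formula), Formula.fsize ψ ≤ n →
          IsPi (m+1) ψ → ∀ d, IsPi (m+1) (ψ.lift d) := by
        intro n
        induction n with
        | zero => intro ψ hs _; exact absurd hs (by have := Formula.fsize_pos ψ; omega)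
        | succ n ihn =>
            intro ψ hs h d
            cases h with
            | ofSigma h => exact .ofSigma (ih.1 _ h d)
            | all h =>
                refine .all (ihn _ ?_ h (d+1))
                simp [Formula.fsize] at hs; omega
      exact ⟨fun φ h => keyS _ φ le_rfl h, fun φ h => keyP _ φ le_rfl h⟩

theorem IsSigma.lift {φ : Formula} {m : ℕ} (h : IsSigma m φ) (d : ℕ) : IsSigma m (φ.lift d) :=
  (sigma_pi_lift m).1 φ h d

theorem IsPi.lift {φ : Formula} {m : ℕ} (h : IsPi m φ) (d : ℕ) : IsPi m (φ.lift d) :=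
  (sigma_pi_lift m).2 φ h d

theorem qf_noDollar : ∀ φ : Formula, φ.isQF → φ.noDollar := by
  intro φ
  induction φ <;> intro h <;> simp [Formula.isQF, Formula.noDollar] at * <;> aesop

theorem sigma_pi_noDollar : ∀ (m : ℕ),
    (∀ φ : Formula, IsSigma m φ → φ.noDollar) ∧
    (∀ φ : Formula, IsPi m φ → φ.noDollar) := by
  intro m
  induction m with
  | zero =>
      refine ⟨fun φ h => ?_, fun φ h => ?_⟩
      · cases h with | qf h => exact qf_noDollar φ h
      · cases h with | qf h => exact qf_noDollar φ h
  | succ m ih =>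
      have keyS : ∀ (n : ℕ) (ψ : Formula), Formula.fsize ψ ≤ n →
          IsSigma (m+1) ψ → ψ.noDollar := by
        intro n
        induction n with
        | zero => intro ψ hs _; exact absurd hs (by have := Formula.fsize_pos ψ; omega)
        | succ n ihn =>
            intro ψ hs h
            cases h with
            | ofPi h => exact ih.2 _ h
            | ex h =>
                refine (ihn _ ?_ h : Formula.noDollar _)
                simp [Formula.fsize] at hs; omega
      have keyP : ∀ (n : ℕ) (ψ : Formula), Formula.fsize ψ ≤ n →
          IsPi (m+1) ψ → ψ.noDollar := by
        intro n
        induction n with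
        | zero => intro ψ hs _; exact absurd hs (by have := Formula.fsize_pos ψ; omega)
        | succ n ihn =>
            intro ψ hs h
            cases h with
            | ofSigma h => exact ih.1 _ h
            | all h =>
                refine (ihn _ ?_ h : Formula.noDollar _)
                simp [Formula.fsize] at hs; omega
      exact ⟨fun φ h => keyS _ φ le_rfl h, fun φ h => keyP _ φ le_rfl h⟩

theorem IsSigma.noDollar {φ : Formula} {m : ℕ} (h : IsSigma m φ) : φ.noDollar :=
  (sigma_pi_noDollar m).1 φ h

theorem IsPi.noDollar {φ : Formula} {m : ℕ} (h : IsPi m φ) : φ.noDollar :=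
  (sigma_pi_noDollar m).2 φ h

theorem sigma_pi_dual : ∀ (m : ℕ),
    (∀ φ : Formula, IsSigma m φ → IsPi m φ.dual) ∧
    (∀ φ : Formula, IsPi m φ → IsSigma m φ.dual) := by
  have qfd : ∀ (j : ℕ) (φ : Formula), φ.isQF → IsPi j φ.dual ∧ IsSigma j φ.dual := by
    intro j φ h
    rw [Formula.dual_of_qf h]
    exact ⟨isQF_isPi (Formula.isQF_neg h), isQF_isSigma (Formula.isQF_neg h)⟩
  intro m
  induction m with
  | zero =>
      refine ⟨fun φ h => ?_, fun φ h => ?_⟩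
      · cases h with | qf h => exact (qfd 0 φ h).1
      · cases h with | qf h => exact (qfd 0 φ h).2
  | succ m ih =>
      have keyS : ∀ (n : ℕ) (ψ : Formula), Formula.fsize ψ ≤ n →
          IsSigma (m+1) ψ → IsPi (m+1) ψ.dual := by
        intro n
        induction n with
        | zero => intro ψ hs _; exact absurd hs (by have := Formula.fsize_pos ψ; omega)
        | succ n ihn =>
            intro ψ hs h
            cases h with
            | ofPi h => exact .ofSigma (ih.2 _ h)
            | ex h =>
                refine .all (ihn _ ?_ h)
                simp [Formula.fsize] at hs; omega
      have keyP : ∀ (n : ℕ) (ψ : Formula), Formula.fsize ψ ≤ n →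
          IsPi (m+1) ψ → IsSigma (m+1) ψ.dual := by
        intro n
        induction n with
        | zero => intro ψ hs _; exact absurd hs (by have := Formula.fsize_pos ψ; omega)
        | succ n ihn =>
            intro ψ hs h
            cases h with
            | ofSigma h => exact .ofPi (ih.1 _ h)
            | all h =>
                refine .ex (ihn _ ?_ h)
                simp [Formula.fsize] at hs; omega
      exact ⟨fun φ h => keyS _ φ le_rfl h, fun φ h => keyP _ φ le_rfl h⟩

theorem IsSigma.dual_pi {φ : Formula} {m : ℕ} (h : IsSigma m φ) : IsPi m φ.dual :=
  (sigma_pi_dual m).1 φ h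

theorem IsPi.dual_sigma {φ : Formula} {m : ℕ} (h : IsPi m φ) : IsSigma m φ.dual :=
  (sigma_pi_dual m).2 φ h
/-! ### Lift computation lemmas -/

namespace Formula

@[simp] theorem lift_falsum (d : ℕ) : Formula.falsum.lift d = Formula.falsum := rfl
@[simp] theorem lift_dollar (d : ℕ) : Formula.dollar.lift d = Formula.dollar := rfl
@[simp] theorem lift_and (φ ψ : Formula) (d : ℕ) : (φ.and ψ).lift d = (φ.lift d).and (ψ.lift d) := rfl
@[simp] theorem lift_or (φ ψ : Formula) (d : ℕ) : (φ.or ψ).lift d = (φ.lift d).or (ψ.lift d) := rfl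
@[simp] theorem lift_imp (φ ψ : Formula) (d : ℕ) : (φ.imp ψ).lift d = (φ.lift d).imp (ψ.lift d) := rfl
@[simp] theorem lift_all (φ : Formula) (d : ℕ) : (φ.all).lift d = (φ.lift (d+1)).all := rfl
@[simp] theorem lift_ex (φ : Formula) (d : ℕ) : (φ.ex).lift d = (φ.lift (d+1)).ex := rfl
@[simp] theorem lift_neg (φ : Formula) (d : ℕ) : (φ.neg).lift d = (φ.lift d).neg := rfl

end Formula

/-! ### Hilbert-style toolkit -/

namespace Proves

variable {Γ Γ' : Set Formula} {φ ψ χ δ A B H : Formula}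

theorem k1 (h : Proves Γ ψ) : Proves Γ (φ.imp ψ) := (Proves.ha (HAAx.axK ψ φ)).mp h

theorem mp2 (h : Proves Γ (φ.imp (ψ.imp χ))) (h2 : Proves Γ (φ.imp ψ)) : Proves Γ (φ.imp χ) :=
  ((Proves.ha (HAAx.axS φ ψ χ)).mp h).mp h2

theorem id1 : Proves Γ (φ.imp φ) :=
  mp2 (Proves.ha (HAAx.axK φ (φ.imp φ))) (Proves.ha (HAAx.axK φ φ))

theorem trans (h1 : Proves Γ (φ.imp ψ)) (h2 : Proves Γ (ψ.imp χ)) : Proves Γ (φ.imp χ) :=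
  mp2 (k1 h2) h1

theorem swap (h : Proves Γ (φ.imp (ψ.imp χ))) : Proves Γ (ψ.imp (φ.imp χ)) :=
  trans (Proves.ha (HAAx.axK ψ φ)) ((Proves.ha (HAAx.axS φ ψ χ)).mp h)

theorem leftComp (h : Proves Γ (ψ.imp χ)) : Proves Γ ((φ.imp ψ).imp (φ.imp χ)) :=
  (Proves.ha (HAAx.axS φ ψ χ)).mp (k1 h)

theorem rightComp (h : Proves Γ (φ.imp ψ)) : Proves Γ ((ψ.imp χ).imp (φ.imp χ)) :=
  trans (Proves.ha (HAAx.axK (ψ.imp χ) φ)) ((swap (Proves.ha (HAAx.axS φ ψ χ))).mp h)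

theorem andL : Proves Γ ((φ.and ψ).imp φ) := Proves.ha (HAAx.andE1 φ ψ)
theorem andR : Proves Γ ((φ.and ψ).imp ψ) := Proves.ha (HAAx.andE2 φ ψ)
theorem orL : Proves Γ (φ.imp (φ.or ψ)) := Proves.ha (HAAx.orI1 φ ψ)
theorem orR : Proves Γ (ψ.imp (φ.or ψ)) := Proves.ha (HAAx.orI2 φ ψ)

theorem curry (h : Proves Γ ((χ.and φ).imp δ)) : Proves Γ (χ.imp (φ.imp δ)) :=
  trans (Proves.ha (HAAx.andI χ φ)) (leftComp h)

theorem uncurry (h : Proves Γ (χ.imp (φ.imp δ))) : Proves Γ ((χ.and φ).imp δ) :=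
  mp2 (trans (Proves.ha (HAAx.andE1 χ φ)) h) (Proves.ha (HAAx.andE2 χ φ))

theorem andI2 (h1 : Proves Γ (χ.imp φ)) (h2 : Proves Γ (χ.imp ψ)) : Proves Γ (χ.imp (φ.and ψ)) :=
  mp2 (trans h1 (Proves.ha (HAAx.andI φ ψ))) h2

theorem andMono (h1 : Proves Γ (φ.imp χ)) (h2 : Proves Γ (ψ.imp δ)) :
    Proves Γ ((φ.and ψ).imp (χ.and δ)) :=
  andI2 (trans andL h1) (trans andR h2)

theorem orE1 (h1 : Proves Γ (φ.imp χ)) (h2 : Proves Γ (ψ.imp χ)) : Proves Γ ((φ.or ψ).imp χ) :=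
  ((Proves.ha (HAAx.orE φ ψ χ)).mp h1).mp h2

theorem orMono (h1 : Proves Γ (φ.imp χ)) (h2 : Proves Γ (ψ.imp δ)) :
    Proves Γ ((φ.or ψ).imp (χ.or δ)) :=
  orE1 (trans h1 orL) (trans h2 orR)

theorem orElimC (h : Proves Γ (χ.imp (φ.or ψ))) (h1 : Proves Γ (χ.imp (φ.imp δ)))
    (h2 : Proves Γ (χ.imp (ψ.imp δ))) : Proves Γ (χ.imp δ) :=
  mp2 (mp2 (mp2 (k1 (Proves.ha (HAAx.orE φ ψ δ))) h1) h2) h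

theorem efq1 : Proves Γ (Formula.falsum.imp φ) := Proves.ha (HAAx.efq φ)

theorem negElim : Proves Γ (φ.neg.imp (φ.imp ψ)) := leftComp efq1

theorem contrapose1 (h : Proves Γ (φ.imp ψ)) : Proves Γ (ψ.neg.imp φ.neg) := rightComp h

theorem negI (h : Proves Γ (χ.imp φ)) (h2 : Proves Γ (χ.imp φ.neg)) : Proves Γ (χ.imp ψ) :=
  trans (mp2 h2 h) efq1

theorem dne_of_dec (hdec : Proves Γ (φ.or φ.neg)) : Proves Γ (φ.neg.neg.imp φ) :=
  (orE1 (Proves.ha (HAAx.axK φ φ.neg.neg))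
    (mp2 (k1 (leftComp efq1)) (swap id1))).mp hdec

theorem mono (h : Proves Γ φ) (hsub : Γ ⊆ Γ') : Proves Γ' φ := by
  induction h with
  | ax hm => exact .ax (hsub hm)
  | ha hx => exact .ha hx
  | mp _ _ ih1 ih2 => exact ih1.mp ih2
  | gen _ ih => exact ih.gen

theorem transfer (h : Proves Γ φ) (hax : ∀ ψ ∈ Γ, Proves Γ' ψ) : Proves Γ' φ := by
  induction h with
  | ax hm => exact hax _ hm
  | ha hx => exact .ha hx
  | mp _ _ ih1 ih2 => exact ih1.mp ih2
  | gen _ ih => exact ih.gen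

/-! ### quantifier rules -/

theorem genImp (h : Proves Γ (φ.imp ψ)) : Proves Γ (φ.all.imp ψ.all) :=
  (Proves.ha (HAAx.allK φ ψ)).mp h.gen

theorem allIntro (h : Proves Γ ((χ.lift 0).imp φ)) : Proves Γ (χ.imp φ.all) :=
  trans (Proves.ha (HAAx.allVac χ)) (genImp h)

theorem exElim (h : Proves Γ (φ.imp (ψ.lift 0))) : Proves Γ (φ.ex.imp ψ) :=
  (Proves.ha (HAAx.exE φ ψ)).mp h.gen

theorem allE0 (t : Term) : Proves Γ (φ.all.imp (Formula.subst 0 t φ)) :=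
  Proves.ha (HAAx.allE φ t)

theorem exI0 (t : Term) : Proves Γ ((Formula.subst 0 t φ).imp φ.ex) :=
  Proves.ha (HAAx.exI φ t)

theorem allE_self : Proves Γ ((Formula.all (φ.lift 1)).imp φ) := by
  have h := allE0 (Γ := Γ) (φ := φ.lift 1) (Term.var 0)
  rwa [show φ.lift 1 = φ.lift (0+1) from rfl, Formula.subst_lift_var] at h

theorem allE_const : Proves Γ ((Formula.all (φ.lift 0)).imp φ) := by
  have h := allE0 (Γ := Γ) (φ := φ.lift 0) Term.zero
  rwa [Formula.subst_lift] at h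

theorem exI_self : Proves Γ (φ.imp (Formula.ex (φ.lift 1))) := by
  have h := exI0 (Γ := Γ) (φ := φ.lift 1) (Term.var 0)
  rwa [show φ.lift 1 = φ.lift (0+1) from rfl, Formula.subst_lift_var] at h

theorem exI_const : Proves Γ (φ.imp (Formula.ex (φ.lift 0))) := by
  have h := exI0 (Γ := Γ) (φ := φ.lift 0) Term.zero
  rwa [Formula.subst_lift] at h

theorem exMono (h : Proves Γ (φ.imp ψ)) : Proves Γ (φ.ex.imp ψ.ex) :=
  exElim (trans h exI_self)

/-! ### quantifier shift lemmas -/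

-- ∀-∧ shifts (intuitionistic, both directions)
theorem andAllL_fwd : Proves Γ (((A.all).and B).imp (Formula.all (A.and (B.lift 0)))) :=
  allIntro (andMono allE_self id1)

theorem andAllL_bwd : Proves Γ ((Formula.all (A.and (B.lift 0))).imp ((A.all).and B)) := by
  refine andI2 (genImp andL) ?_
  have h := allE0 (Γ := Γ) (φ := A.and (B.lift 0)) Term.zero
  rw [show Formula.subst 0 Term.zero (A.and (B.lift 0))
      = (Formula.subst 0 Term.zero A).and B by simp [Formula.subst, Formula.subst_lift]] at h
  exact trans h andR

theorem andAllR_fwd : Proves Γ ((A.and (B.all)).imp (Formula.all ((A.lift 0).and B))) :=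
  allIntro (andMono id1 allE_self)

theorem andAllR_bwd : Proves Γ ((Formula.all ((A.lift 0).and B)).imp (A.and (B.all))) := by
  refine andI2 ?_ (genImp andR)
  have h := allE0 (Γ := Γ) (φ := (A.lift 0).and B) Term.zero
  rw [show Formula.subst 0 Term.zero ((A.lift 0).and B)
      = A.and (Formula.subst 0 Term.zero B) by simp [Formula.subst, Formula.subst_lift]] at h
  exact trans h andL

-- ∃-∧ shifts (intuitionistic, both directions)
theorem andExL_fwd : Proves Γ (((A.ex).and B).imp (Formula.ex (A.and (B.lift 0)))) :=
  uncurry (exElim (curry exI_self))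

theorem andExL_bwd : Proves Γ ((Formula.ex (A.and (B.lift 0))).imp ((A.ex).and B)) :=
  exElim (andI2 (trans andL exI_self) andR)

theorem andExR_fwd : Proves Γ ((A.and (B.ex)).imp (Formula.ex ((A.lift 0).and B))) :=
  uncurry (swap (exElim (swap (curry exI_self))))

theorem andExR_bwd : Proves Γ ((Formula.ex ((A.lift 0).and B)).imp (A.and (B.ex))) :=
  exElim (andI2 andL (trans andR exI_self))

-- ∃-∨ shifts (intuitionistic, both directions)
theorem orExL_fwd : Proves Γ (((A.ex).or B).imp (Formula.ex (A.or (B.lift 0)))) := by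
  refine orE1 (exMono orL) ?_
  have h := exI0 (Γ := Γ) (φ := A.or (B.lift 0)) Term.zero
  rw [show Formula.subst 0 Term.zero (A.or (B.lift 0))
      = (Formula.subst 0 Term.zero A).or B by simp [Formula.subst, Formula.subst_lift]] at h
  exact trans orR h

theorem orExL_bwd : Proves Γ ((Formula.ex (A.or (B.lift 0))).imp ((A.ex).or B)) :=
  exElim (orMono exI_self id1)

theorem orExR_fwd : Proves Γ ((A.or (B.ex)).imp (Formula.ex ((A.lift 0).or B))) := by
  refine orE1 ?_ (exMono orR)
  have h := exI0 (Γ := Γ) (φ := (A.lift 0).or B) Term.zero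
  rw [show Formula.subst 0 Term.zero ((A.lift 0).or B)
      = A.or (Formula.subst 0 Term.zero B) by simp [Formula.subst, Formula.subst_lift]] at h
  exact trans orL h

theorem orExR_bwd : Proves Γ ((Formula.ex ((A.lift 0).or B)).imp (A.or (B.ex))) :=
  exElim (orMono id1 exI_self)

-- ∀-∨ shifts: forward intuitionistic, backward needs decidability of the side formula
theorem orAllL_fwd : Proves Γ (((A.all).or B).imp (Formula.all (A.or (B.lift 0)))) :=
  allIntro (orMono allE_self id1)

theorem orAllL_bwd (hB : Proves Γ (B.or B.neg)) :
    Proves Γ ((Formula.all (A.or (B.lift 0))).imp ((A.all).or B)) := by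
  have step : Proves Γ ((B.neg.and (Formula.all (A.or (B.lift 0)))).imp A.all) := by
    refine allIntro ?_
    exact orElimC (trans (andR (φ := (B.lift 0).neg)
        (ψ := Formula.all ((A.or (B.lift 0)).lift 1))) allE_self)
      (k1 id1) (trans (andL (φ := (B.lift 0).neg)) negElim)
  exact (orE1 (trans orR (Proves.ha (HAAx.axK _ _))) (curry (trans step orL))).mp hB

theorem orAllR_fwd : Proves Γ ((A.or (B.all)).imp (Formula.all ((A.lift 0).or B))) :=
  allIntro (orMono id1 allE_self)

theorem orAllR_bwd (hA : Proves Γ (A.or A.neg)) :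
    Proves Γ ((Formula.all ((A.lift 0).or B)).imp (A.or (B.all))) := by
  have step : Proves Γ ((A.neg.and (Formula.all ((A.lift 0).or B))).imp B.all) := by
    refine allIntro ?_
    exact orElimC (trans (andR (φ := (A.lift 0).neg)
        (ψ := Formula.all (((A.lift 0).or B).lift 1))) allE_self)
      (trans (andL (φ := (A.lift 0).neg)) negElim) (k1 id1)
  exact (orE1 (trans orL (Proves.ha (HAAx.axK _ _))) (curry (trans step orR))).mp hA

-- →-quantifier shifts
theorem impExL_fwd : Proves Γ (((A.ex).imp B).imp (Formula.all (A.imp (B.lift 0)))) :=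
  allIntro (rightComp exI_self)

theorem impExL_bwd : Proves Γ ((Formula.all (A.imp (B.lift 0))).imp ((A.ex).imp B)) :=
  swap (exElim (swap (allE_self (φ := A.imp (B.lift 0)))))

theorem impAllR_fwd : Proves Γ ((χ.imp (B.all)).imp (Formula.all ((χ.lift 0).imp B))) :=
  allIntro (leftComp allE_self)

theorem impAllR_bwd : Proves Γ ((Formula.all ((χ.lift 0).imp B)).imp (χ.imp (B.all))) := by
  refine curry (allIntro ?_)
  exact mp2 (trans andL (allE_self (φ := (χ.lift 0).imp B))) andR

theorem impAllL_bwd : Proves Γ ((Formula.ex (A.imp (B.lift 0))).imp ((A.all).imp B)) :=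
  exElim (rightComp (allE_self (φ := A)))

theorem impExR_bwd : Proves Γ ((Formula.ex ((χ.lift 0).imp B)).imp (χ.imp (B.ex))) :=
  exElim (leftComp exI_self)

-- negation/quantifier interaction
theorem allNeg_negEx : Proves Γ ((Formula.all A.neg).imp (A.ex).neg) :=
  Proves.ha (HAAx.exE A Formula.falsum)

theorem negEx_allNeg : Proves Γ ((A.ex).neg.imp (Formula.all A.neg)) :=
  allIntro (contrapose1 exI_self)

theorem exNeg_negAll : Proves Γ ((Formula.ex A.neg).imp (A.all).neg) :=
  exElim (contrapose1 (allE_self (φ := A)))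

end Proves
/-! ### Inversion lemmas -/

theorem isQF_of_sigma0 {φ : Formula} (h : IsSigma 0 φ) : φ.isQF := by
  cases h with | qf h => exact h

theorem isQF_of_pi0 {φ : Formula} (h : IsPi 0 φ) : φ.isQF := by
  cases h with | qf h => exact h

theorem sigma_succ_nonex {m : ℕ} {φ : Formula} (h : IsSigma (m+1) φ)
    (hne : ∀ β, φ ≠ Formula.ex β) : IsPi m φ := by
  cases h with
  | ofPi hp => exact hp
  | ex => exact absurd rfl (hne _)

theorem pi_succ_nonall {m : ℕ} {φ : Formula} (h : IsPi (m+1) φ)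
    (hne : ∀ β, φ ≠ Formula.all β) : IsSigma m φ := by
  cases h with
  | ofSigma hs => exact hs
  | all => exact absurd rfl (hne _)

theorem sigma_ex_inv : ∀ (m : ℕ) (β : Formula), IsSigma m (Formula.ex β) →
    1 ≤ m ∧ IsSigma m β := by
  intro m
  induction m using Nat.strong_induction_on with
  | _ m ih =>
    intro β h
    cases h with
    | qf h => exact absurd h (by simp [Formula.isQF])
    | ofPi hp =>
        rename_i m'
        cases hp with
        | qf h => exact absurd h (by simp [Formula.isQF])
        | ofSigma hs =>
            rename_i m''
            have h2 := ih m'' (by omega) β hs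
            exact ⟨by omega, h2.2.mono (by omega)⟩
    | ex h =>
        rename_i k
        exact ⟨by omega, h⟩

theorem pi_all_inv : ∀ (m : ℕ) (β : Formula), IsPi m (Formula.all β) →
    1 ≤ m ∧ IsPi m β := by
  intro m
  induction m using Nat.strong_induction_on with
  | _ m ih =>
    intro β h
    cases h with
    | qf h => exact absurd h (by simp [Formula.isQF])
    | ofSigma hs =>
        rename_i m'
        cases hs with
        | qf h => exact absurd h (by simp [Formula.isQF])
        | ofPi hp =>
            rename_i m''
            have h2 := ih m'' (by omega) β hp
            exact ⟨by omega, h2.2.mono (by omega)⟩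
    | all h =>
        rename_i k
        exact ⟨by omega, h⟩

theorem sp_ex {m : ℕ} {β : Formula} (h : IsSigma m (Formula.ex β) ∨ IsPi m (Formula.ex β)) :
    1 ≤ m ∧ IsSigma m (Formula.ex β) ∧ IsSigma m β := by
  rcases h with h | h
  · have h2 := sigma_ex_inv m β h
    exact ⟨h2.1, h, h2.2⟩
  · cases h with
    | qf h => exact absurd h (by simp [Formula.isQF])
    | ofSigma hs =>
        rename_i m'
        have h2 := sigma_ex_inv m' β hs
        exact ⟨by omega, hs.mono (by omega), h2.2.mono (by omega)⟩

theorem sp_all {m : ℕ} {β : Formula} (h : IsSigma m (Formula.all β) ∨ IsPi m (Formula.all β)) :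
    1 ≤ m ∧ IsPi m (Formula.all β) ∧ IsPi m β := by
  rcases h with h | h
  · cases h with
    | qf h => exact absurd h (by simp [Formula.isQF])
    | ofPi hp =>
        rename_i m'
        have h2 := pi_all_inv m' β hp
        exact ⟨by omega, hp.mono (by omega), h2.2.mono (by omega)⟩
  · have h2 := pi_all_inv m β h
    exact ⟨h2.1, h, h2.2⟩

/-! ### Quantifier-free decidability -/

namespace Proves

variable {Γ : Set Formula} {φ ψ : Formula}

theorem dec_falsum : Proves Γ (Formula.falsum.or Formula.falsum.neg) := orR.mp id1

theorem dec_eq (t u : Term) : Proves Γ ((Formula.eq t u).or (Formula.eq t u).neg) :=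
  Proves.ha (HAAx.atomDec t u)

theorem dec_and (h1 : Proves Γ (φ.or φ.neg)) (h2 : Proves Γ (ψ.or ψ.neg)) :
    Proves Γ ((φ.and ψ).or (φ.and ψ).neg) := by
  have c1 : Proves Γ (φ.imp ((φ.and ψ).or (φ.and ψ).neg)) :=
    orElimC (k1 h2) (curry orL) (k1 (trans (contrapose1 andR) orR))
  have c2 : Proves Γ (φ.neg.imp ((φ.and ψ).or (φ.and ψ).neg)) :=
    trans (contrapose1 andL) orR
  exact (orE1 c1 c2).mp h1

theorem dec_or (h1 : Proves Γ (φ.or φ.neg)) (h2 : Proves Γ (ψ.or ψ.neg)) :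
    Proves Γ ((φ.or ψ).or (φ.or ψ).neg) := by
  have e : Proves Γ ((φ.or ψ).imp ((φ.neg.and ψ.neg).imp Formula.falsum)) :=
    orE1 (swap andL) (swap andR)
  have c2 : Proves Γ (φ.neg.imp ((φ.or ψ).or (φ.or ψ).neg)) :=
    orElimC (k1 h2) (k1 (trans orR orL)) (curry (trans (swap e) orR))
  exact (orE1 (trans orL orL) c2).mp h1

theorem dec_imp (h1 : Proves Γ (φ.or φ.neg)) (h2 : Proves Γ (ψ.or ψ.neg)) :
    Proves Γ ((φ.imp ψ).or (φ.imp ψ).neg) := by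
  -- case φ, case ¬ψ : ¬(φ→ψ)
  have hneg : Proves Γ ((φ.and ψ.neg).imp (φ.imp ψ).neg) := by
    have b : Proves Γ ((φ.imp ψ).imp ((φ.and ψ.neg).imp ψ)) := rightComp andL
    have a2 : Proves Γ ((φ.imp ψ).imp ((φ.and ψ.neg).imp ψ.neg)) := k1 andR
    exact swap (mp2 (mp2 (k1 (Proves.ha (HAAx.axS (φ.and ψ.neg) ψ Formula.falsum))) a2) b)
  have c1 : Proves Γ (φ.imp ((φ.imp ψ).or (φ.imp ψ).neg)) :=
    orElimC (k1 h2) (k1 (trans (Proves.ha (HAAx.axK ψ φ)) orL))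
      (curry (trans (trans (andI2 andL andR) hneg) orR))
  have c2 : Proves Γ (φ.neg.imp ((φ.imp ψ).or (φ.imp ψ).neg)) := trans negElim orL
  exact (orE1 c1 c2).mp h1

theorem qf_dec : ∀ (φ : Formula), φ.isQF → ∀ {Γ : Set Formula}, Proves Γ (φ.or φ.neg) := by
  intro φ
  induction φ with
  | falsum => intro _ _; exact dec_falsum
  | dollar => intro h; exact absurd h (by simp [Formula.isQF])
  | eq t u => intro _ _; exact dec_eq t u
  | and φ ψ ih1 ih2 => intro h Γ; exact dec_and (ih1 h.1) (ih2 h.2)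
  | or φ ψ ih1 ih2 => intro h Γ; exact dec_or (ih1 h.1) (ih2 h.2)
  | imp φ ψ ih1 ih2 => intro h Γ; exact dec_imp (ih1 h.1) (ih2 h.2)
  | all φ ih => intro h; exact absurd h (by simp [Formula.isQF])
  | ex φ ih => intro h; exact absurd h (by simp [Formula.isQF])

/-! ### Duality lemmas -/

theorem dual_imp_neg : ∀ (φ : Formula) {Γ : Set Formula}, Proves Γ (φ.dual.imp φ.neg) := by
  intro φ
  induction φ with
  | all φ ih => exact fun {Γ} => trans (exMono ih) exNeg_negAll
  | ex φ ih => exact fun {Γ} => trans (genImp ih) allNeg_negEx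
  | falsum => exact fun {Γ} => id1
  | dollar => exact fun {Γ} => id1
  | eq t u => exact fun {Γ} => id1
  | and _ _ _ _ => exact fun {Γ} => id1
  | or _ _ _ _ => exact fun {Γ} => id1
  | imp _ _ _ _ => exact fun {Γ} => id1

end Proves

theorem lem_of_sigma {m : ℕ} {φ : Formula} (h : IsSigma m φ) :
    Proves (sigLEM m) (φ.or φ.neg) := Proves.ax ⟨φ, h, rfl⟩

theorem nonquant_qf : ∀ (m : ℕ) (φ : Formula), (IsSigma m φ ∨ IsPi m φ) →
    (∀ β, φ ≠ Formula.ex β) → (∀ β, φ ≠ Formula.all β) → φ.isQF := by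
  intro m
  induction m using Nat.strong_induction_on with
  | _ m ih =>
    intro φ hcl hne he
    rcases hcl with h | h
    · cases h with
      | qf h => exact h
      | ofPi hp => exact ih _ (by omega) φ (Or.inr hp) hne he
      | ex => exact absurd rfl (hne _)
    · cases h with
      | qf h => exact h
      | ofSigma hs => exact ih _ (by omega) φ (Or.inl hs) hne he
      | all => exact absurd rfl (he _)

/-- `¬φ → φᵈ` and `¬(φᵈ) → φ` for prenex `φ`, over `Σ_m`-LEM. -/
theorem neg_dual_main : ∀ (n : ℕ) (φ : Formula) (m : ℕ), Formula.fsize φ ≤ n →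
    (IsSigma m φ ∨ IsPi m φ) →
    Proves (sigLEM m) (φ.neg.imp φ.dual) ∧ Proves (sigLEM m) (φ.dual.neg.imp φ) := by
  intro n
  induction n with
  | zero =>
      intro φ m h _
      exact absurd h (by have := Formula.fsize_pos φ; omega)
  | succ n ih =>
      intro φ m hs hcl
      match φ, hcl with
      | Formula.ex β, hcl =>
          obtain ⟨hm, hexσ, hβσ⟩ := sp_ex hcl
          have hβ := ih β m (by simp [Formula.fsize] at hs; omega) (Or.inl hβσ)
          constructor
          · -- ¬∃β → ∀βᵈ
            refine Proves.allIntro ?_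
            exact Proves.trans (Proves.contrapose1 Proves.exI_self) hβ.1
          · -- ¬(∀βᵈ) → ∃β : use LEM on ∃β
            have lem := lem_of_sigma hexσ
            have b1 : Proves (sigLEM m) ((Formula.ex β).imp
                ((Formula.ex β).dual.neg.imp (Formula.ex β))) :=
              Proves.ha (HAAx.axK _ _)
            have t : Proves (sigLEM m) ((Formula.ex β).neg.imp (Formula.all β.dual)) :=
              Proves.trans Proves.negEx_allNeg (Proves.genImp hβ.1)
            have b2 : Proves (sigLEM m) ((Formula.ex β).neg.imp
                ((Formula.ex β).dual.neg.imp (Formula.ex β))) :=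
              Proves.mp2 (Proves.k1 (Proves.swap Proves.negElim)) t
            exact (Proves.orE1 b1 b2).mp lem
      | Formula.all β, hcl =>
          obtain ⟨hm, hallπ, hβπ⟩ := sp_all hcl
          have hβ := ih β m (by simp [Formula.fsize] at hs; omega) (Or.inr hβπ)
          have hexd : IsSigma m (Formula.ex β.dual) := by
            obtain ⟨m', rfl⟩ : ∃ m', m = m' + 1 := ⟨m - 1, by omega⟩
            exact IsSigma.ex (hβπ.dual_sigma)
          constructor
          · -- ¬∀β → ∃βᵈ : use LEM on ∃βᵈ
            have lem := lem_of_sigma hexd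
            have b1 : Proves (sigLEM m) ((Formula.ex β.dual).imp
                ((Formula.all β).neg.imp (Formula.ex β.dual))) := Proves.ha (HAAx.axK _ _)
            have t : Proves (sigLEM m) ((Formula.ex β.dual).neg.imp (Formula.all β)) :=
              Proves.trans Proves.negEx_allNeg (Proves.genImp hβ.2)
            have b2 : Proves (sigLEM m) ((Formula.ex β.dual).neg.imp
                ((Formula.all β).neg.imp (Formula.ex β.dual))) :=
              Proves.mp2 (Proves.k1 (Proves.swap Proves.negElim)) t
            exact (Proves.orE1 b1 b2).mp lem
          · -- ¬(∃βᵈ) → ∀β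
            refine Proves.allIntro ?_
            exact Proves.trans (Proves.contrapose1 (Proves.exI_self (φ := β.dual))) hβ.2
      | Formula.falsum, hcl => exact ⟨Proves.id1, Proves.dne_of_dec Proves.dec_falsum⟩
      | Formula.dollar, hcl =>
          exact absurd (nonquant_qf m _ hcl (fun β h => Formula.noConfusion h)
            (fun β h => Formula.noConfusion h)) (by simp [Formula.isQF])
      | Formula.eq t u, hcl => exact ⟨Proves.id1, Proves.dne_of_dec (Proves.dec_eq t u)⟩
      | Formula.and a b, hcl => ?_
      | Formula.or a b, hcl => ?_
      | Formula.imp a b, hcl => ?_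
      all_goals {
        first
        | (have hqf : (Formula.and a b).isQF := nonquant_qf m _ hcl
              (fun β h => Formula.noConfusion h) (fun β h => Formula.noConfusion h)
           constructor
           · rw [Formula.dual_of_qf hqf]; exact Proves.id1
           · rw [Formula.dual_of_qf hqf]; exact Proves.dne_of_dec (Proves.qf_dec _ hqf))
        | (have hqf : (Formula.or a b).isQF := nonquant_qf m _ hcl
              (fun β h => Formula.noConfusion h) (fun β h => Formula.noConfusion h)
           constructor
           · rw [Formula.dual_of_qf hqf]; exact Proves.id1
           · rw [Formula.dual_of_qf hqf]; exact Proves.dne_of_dec (Proves.qf_dec _ hqf))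
        | (have hqf : (Formula.imp a b).isQF := nonquant_qf m _ hcl
              (fun β h => Formula.noConfusion h) (fun β h => Formula.noConfusion h)
           constructor
           · rw [Formula.dual_of_qf hqf]; exact Proves.id1
           · rw [Formula.dual_of_qf hqf]; exact Proves.dne_of_dec (Proves.qf_dec _ hqf))
      }
/-! ### LEM instances -/

theorem neg_imp_dual {m : ℕ} {φ : Formula} (h : IsSigma m φ ∨ IsPi m φ) :
    Proves (sigLEM m) (φ.neg.imp φ.dual) := (neg_dual_main _ φ m le_rfl h).1

theorem negdual_imp {m : ℕ} {φ : Formula} (h : IsSigma m φ ∨ IsPi m φ) :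
    Proves (sigLEM m) (φ.dual.neg.imp φ) := (neg_dual_main _ φ m le_rfl h).2

theorem lem_of_pi {m : ℕ} {φ : Formula} (h : IsPi m φ) : Proves (sigLEM m) (φ.or φ.neg) :=
  (Proves.orE1 (Proves.trans (Proves.dual_imp_neg φ) Proves.orR)
    (Proves.trans (negdual_imp (Or.inr h)) Proves.orL)).mp (lem_of_sigma h.dual_sigma)

theorem lem_of_sp {m : ℕ} {φ : Formula} (h : IsSigma m φ ∨ IsPi m φ) :
    Proves (sigLEM m) (φ.or φ.neg) := by
  rcases h with h | h
  · exact lem_of_sigma h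
  · exact lem_of_pi h

theorem proves_sigLEM_mono {m m' : ℕ} {χ : Formula} (hle : m ≤ m')
    (h : Proves (sigLEM m) χ) : Proves (sigLEM m') χ :=
  h.transfer (fun ψ hψ => by
    obtain ⟨φ, hφ, rfl⟩ := hψ
    exact lem_of_sigma (hφ.mono hle))

theorem proves_sigLEM_lemSet {m : ℕ} {χ : Formula} (h : Proves (sigLEM m) χ) :
    Proves lemSet χ :=
  h.transfer (fun ψ hψ => by
    obtain ⟨φ, hφ, rfl⟩ := hψ
    exact Proves.ax ⟨φ, hφ.noDollar, rfl⟩)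

theorem lem_of_noDollar {φ : Formula} (h : φ.noDollar) : Proves lemSet (φ.or φ.neg) :=
  Proves.ax ⟨φ, h, rfl⟩

/-- Object-level contraposition. -/
theorem Proves.ctpObj {Γ : Set Formula} {φ ψ : Formula} :
    Proves Γ ((φ.imp ψ).imp (ψ.neg.imp φ.neg)) :=
  Proves.swap (Proves.trans (Proves.ha (HAAx.axK ψ.neg φ))
    (Proves.ha (HAAx.axS φ ψ Formula.falsum)))

/-! ### Prenex merge for disjunction -/

theorem vee_merge : ∀ (m : ℕ),
    (∀ A B : Formula, IsSigma m A → IsSigma m B → ∃ C, IsSigma m C ∧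
      (∀ Γ, Proves Γ ((A.or B).imp C)) ∧ Proves (sigLEM m) (C.imp (A.or B))) ∧
    (∀ A B : Formula, IsPi m A → IsPi m B → ∃ C, IsPi m C ∧
      (∀ Γ, Proves Γ ((A.or B).imp C)) ∧ Proves (sigLEM m) (C.imp (A.or B))) := by
  intro m
  induction m using Nat.strong_induction_on with
  | _ m ih =>
    match m with
    | 0 =>
        constructor
        · intro A B hA hB
          exact ⟨A.or B, isQF_isSigma ⟨isQF_of_sigma0 hA, isQF_of_sigma0 hB⟩,
            fun Γ => Proves.id1, Proves.id1⟩
        · intro A B hA hB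
          exact ⟨A.or B, isQF_isPi ⟨isQF_of_pi0 hA, isQF_of_pi0 hB⟩,
            fun Γ => Proves.id1, Proves.id1⟩
    | m + 1 =>
        have innerS : ∀ (n : ℕ) (A B : Formula), A.fsize + B.fsize ≤ n →
            IsSigma (m+1) A → IsSigma (m+1) B → ∃ C, IsSigma (m+1) C ∧
            (∀ Γ, Proves Γ ((A.or B).imp C)) ∧ Proves (sigLEM (m+1)) (C.imp (A.or B)) := by
          intro n
          induction n with
          | zero =>
              intro A B hn _ _
              exact absurd hn (by have := Formula.fsize_pos A; have := Formula.fsize_pos B; omega)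
          | succ n ihn =>
              intro A B hn hA hB
              by_cases hAex : ∃ A₀, A = Formula.ex A₀
              · obtain ⟨A₀, rfl⟩ := hAex
                have hA₀ : IsSigma (m+1) A₀ := (sigma_ex_inv _ _ hA).2
                obtain ⟨C₀, hC₀, fwd₀, bwd₀⟩ := ihn A₀ (B.lift 0)
                  (by rw [Formula.fsize_lift]; simp [Formula.fsize] at hn ⊢; omega)
                  hA₀ (hB.lift 0)
                refine ⟨Formula.ex C₀, IsSigma.ex hC₀, ?_, ?_⟩
                · intro Γ
                  exact Proves.trans Proves.orExL_fwd (Proves.exMono (fwd₀ Γ))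
                · exact Proves.trans (Proves.exMono bwd₀) Proves.orExL_bwd
              · by_cases hBex : ∃ B₀, B = Formula.ex B₀
                · obtain ⟨B₀, rfl⟩ := hBex
                  have hB₀ : IsSigma (m+1) B₀ := (sigma_ex_inv _ _ hB).2
                  obtain ⟨C₀, hC₀, fwd₀, bwd₀⟩ := ihn (A.lift 0) B₀
                    (by rw [Formula.fsize_lift]; simp [Formula.fsize] at hn ⊢; omega)
                    (hA.lift 0) hB₀
                  refine ⟨Formula.ex C₀, IsSigma.ex hC₀, ?_, ?_⟩
                  · intro Γ
                    exact Proves.trans Proves.orExR_fwd (Proves.exMono (fwd₀ Γ))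
                  · exact Proves.trans (Proves.exMono bwd₀) Proves.orExR_bwd
                · have hA' : IsPi m A := sigma_succ_nonex hA (fun β hβ => hAex ⟨β, hβ⟩)
                  have hB' : IsPi m B := sigma_succ_nonex hB (fun β hβ => hBex ⟨β, hβ⟩)
                  obtain ⟨C, hC, fwd, bwd⟩ := (ih m (by omega)).2 A B hA' hB'
                  exact ⟨C, .ofPi hC, fwd, proves_sigLEM_mono (by omega) bwd⟩
        have innerP : ∀ (n : ℕ) (A B : Formula), A.fsize + B.fsize ≤ n →
            IsPi (m+1) A → IsPi (m+1) B → ∃ C, IsPi (m+1) C ∧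
            (∀ Γ, Proves Γ ((A.or B).imp C)) ∧ Proves (sigLEM (m+1)) (C.imp (A.or B)) := by
          intro n
          induction n with
          | zero =>
              intro A B hn _ _
              exact absurd hn (by have := Formula.fsize_pos A; have := Formula.fsize_pos B; omega)
          | succ n ihn =>
              intro A B hn hA hB
              by_cases hAall : ∃ A₀, A = Formula.all A₀
              · obtain ⟨A₀, rfl⟩ := hAall
                have hA₀ : IsPi (m+1) A₀ := (pi_all_inv _ _ hA).2
                obtain ⟨C₀, hC₀, fwd₀, bwd₀⟩ := ihn A₀ (B.lift 0)
                  (by rw [Formula.fsize_lift]; simp [Formula.fsize] at hn ⊢; omega)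
                  hA₀ (hB.lift 0)
                refine ⟨Formula.all C₀, IsPi.all hC₀, ?_, ?_⟩
                · intro Γ
                  exact Proves.trans Proves.orAllL_fwd (Proves.genImp (fwd₀ Γ))
                · exact Proves.trans (Proves.genImp bwd₀) (Proves.orAllL_bwd (lem_of_pi hB))
              · by_cases hBall : ∃ B₀, B = Formula.all B₀
                · obtain ⟨B₀, rfl⟩ := hBall
                  have hB₀ : IsPi (m+1) B₀ := (pi_all_inv _ _ hB).2
                  obtain ⟨C₀, hC₀, fwd₀, bwd₀⟩ := ihn (A.lift 0) B₀
                    (by rw [Formula.fsize_lift]; simp [Formula.fsize] at hn ⊢; omega)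
                    (hA.lift 0) hB₀
                  refine ⟨Formula.all C₀, IsPi.all hC₀, ?_, ?_⟩
                  · intro Γ
                    exact Proves.trans Proves.orAllR_fwd (Proves.genImp (fwd₀ Γ))
                  · exact Proves.trans (Proves.genImp bwd₀) (Proves.orAllR_bwd (lem_of_pi hA))
                · have hA' : IsSigma m A := pi_succ_nonall hA (fun β hβ => hAall ⟨β, hβ⟩)
                  have hB' : IsSigma m B := pi_succ_nonall hB (fun β hβ => hBall ⟨β, hβ⟩)
                  obtain ⟨C, hC, fwd, bwd⟩ := (ih m (by omega)).1 A B hA' hB'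
                  exact ⟨C, .ofSigma hC, fwd, proves_sigLEM_mono (by omega) bwd⟩
        exact ⟨fun A B hA hB => innerS _ A B le_rfl hA hB,
               fun A B hA hB => innerP _ A B le_rfl hA hB⟩

/-! ### Prenex merge for conjunction (fully intuitionistic) -/

theorem wedge_merge : ∀ (m : ℕ),
    (∀ A B : Formula, IsSigma m A → IsSigma m B → ∃ C, IsSigma m C ∧
      (∀ Γ, Proves Γ ((A.and B).imp C)) ∧ (∀ Γ, Proves Γ (C.imp (A.and B)))) ∧
    (∀ A B : Formula, IsPi m A → IsPi m B → ∃ C, IsPi m C ∧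
      (∀ Γ, Proves Γ ((A.and B).imp C)) ∧ (∀ Γ, Proves Γ (C.imp (A.and B)))) := by
  intro m
  induction m using Nat.strong_induction_on with
  | _ m ih =>
    match m with
    | 0 =>
        constructor
        · intro A B hA hB
          exact ⟨A.and B, isQF_isSigma ⟨isQF_of_sigma0 hA, isQF_of_sigma0 hB⟩,
            fun Γ => Proves.id1, fun Γ => Proves.id1⟩
        · intro A B hA hB
          exact ⟨A.and B, isQF_isPi ⟨isQF_of_pi0 hA, isQF_of_pi0 hB⟩,
            fun Γ => Proves.id1, fun Γ => Proves.id1⟩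
    | m + 1 =>
        have innerS : ∀ (n : ℕ) (A B : Formula), A.fsize + B.fsize ≤ n →
            IsSigma (m+1) A → IsSigma (m+1) B → ∃ C, IsSigma (m+1) C ∧
            (∀ Γ, Proves Γ ((A.and B).imp C)) ∧ (∀ Γ, Proves Γ (C.imp (A.and B))) := by
          intro n
          induction n with
          | zero =>
              intro A B hn _ _
              exact absurd hn (by have := Formula.fsize_pos A; have := Formula.fsize_pos B; omega)
          | succ n ihn =>
              intro A B hn hA hB
              by_cases hAex : ∃ A₀, A = Formula.ex A₀
              · obtain ⟨A₀, rfl⟩ := hAex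
                have hA₀ : IsSigma (m+1) A₀ := (sigma_ex_inv _ _ hA).2
                obtain ⟨C₀, hC₀, fwd₀, bwd₀⟩ := ihn A₀ (B.lift 0)
                  (by rw [Formula.fsize_lift]; simp [Formula.fsize] at hn ⊢; omega)
                  hA₀ (hB.lift 0)
                exact ⟨Formula.ex C₀, IsSigma.ex hC₀,
                  fun Γ => Proves.trans Proves.andExL_fwd (Proves.exMono (fwd₀ Γ)),
                  fun Γ => Proves.trans (Proves.exMono (bwd₀ Γ)) Proves.andExL_bwd⟩
              · by_cases hBex : ∃ B₀, B = Formula.ex B₀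
                · obtain ⟨B₀, rfl⟩ := hBex
                  have hB₀ : IsSigma (m+1) B₀ := (sigma_ex_inv _ _ hB).2
                  obtain ⟨C₀, hC₀, fwd₀, bwd₀⟩ := ihn (A.lift 0) B₀
                    (by rw [Formula.fsize_lift]; simp [Formula.fsize] at hn ⊢; omega)
                    (hA.lift 0) hB₀
                  exact ⟨Formula.ex C₀, IsSigma.ex hC₀,
                    fun Γ => Proves.trans Proves.andExR_fwd (Proves.exMono (fwd₀ Γ)),
                    fun Γ => Proves.trans (Proves.exMono (bwd₀ Γ)) Proves.andExR_bwd⟩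
                · have hA' : IsPi m A := sigma_succ_nonex hA (fun β hβ => hAex ⟨β, hβ⟩)
                  have hB' : IsPi m B := sigma_succ_nonex hB (fun β hβ => hBex ⟨β, hβ⟩)
                  obtain ⟨C, hC, fwd, bwd⟩ := (ih m (by omega)).2 A B hA' hB'
                  exact ⟨C, .ofPi hC, fwd, bwd⟩
        have innerP : ∀ (n : ℕ) (A B : Formula), A.fsize + B.fsize ≤ n →
            IsPi (m+1) A → IsPi (m+1) B → ∃ C, IsPi (m+1) C ∧
            (∀ Γ, Proves Γ ((A.and B).imp C)) ∧ (∀ Γ, Proves Γ (C.imp (A.and B))) := by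
          intro n
          induction n with
          | zero =>
              intro A B hn _ _
              exact absurd hn (by have := Formula.fsize_pos A; have := Formula.fsize_pos B; omega)
          | succ n ihn =>
              intro A B hn hA hB
              by_cases hAall : ∃ A₀, A = Formula.all A₀
              · obtain ⟨A₀, rfl⟩ := hAall
                have hA₀ : IsPi (m+1) A₀ := (pi_all_inv _ _ hA).2
                obtain ⟨C₀, hC₀, fwd₀, bwd₀⟩ := ihn A₀ (B.lift 0)
                  (by rw [Formula.fsize_lift]; simp [Formula.fsize] at hn ⊢; omega)
                  hA₀ (hB.lift 0)
                exact ⟨Formula.all C₀, IsPi.all hC₀,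
                  fun Γ => Proves.trans Proves.andAllL_fwd (Proves.genImp (fwd₀ Γ)),
                  fun Γ => Proves.trans (Proves.genImp (bwd₀ Γ)) Proves.andAllL_bwd⟩
              · by_cases hBall : ∃ B₀, B = Formula.all B₀
                · obtain ⟨B₀, rfl⟩ := hBall
                  have hB₀ : IsPi (m+1) B₀ := (pi_all_inv _ _ hB).2
                  obtain ⟨C₀, hC₀, fwd₀, bwd₀⟩ := ihn (A.lift 0) B₀
                    (by rw [Formula.fsize_lift]; simp [Formula.fsize] at hn ⊢; omega)
                    (hA.lift 0) hB₀
                  exact ⟨Formula.all C₀, IsPi.all hC₀,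
                    fun Γ => Proves.trans Proves.andAllR_fwd (Proves.genImp (fwd₀ Γ)),
                    fun Γ => Proves.trans (Proves.genImp (bwd₀ Γ)) Proves.andAllR_bwd⟩
                · have hA' : IsSigma m A := pi_succ_nonall hA (fun β hβ => hAall ⟨β, hβ⟩)
                  have hB' : IsSigma m B := pi_succ_nonall hB (fun β hβ => hBall ⟨β, hβ⟩)
                  obtain ⟨C, hC, fwd, bwd⟩ := (ih m (by omega)).1 A B hA' hB'
                  exact ⟨C, .ofSigma hC, fwd, bwd⟩
        exact ⟨fun A B hA hB => innerS _ A B le_rfl hA hB,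
               fun A B hA hB => innerP _ A B le_rfl hA hB⟩
/-! ### Prenex form of implications -/

theorem imp_prenex : ∀ (m : ℕ),
    (∀ A B : Formula, IsSigma m A → IsPi m B → ∃ C, IsPi m C ∧
      Proves (sigLEM m) ((A.imp B).imp C) ∧ Proves (sigLEM m) (C.imp (A.imp B))) ∧
    (∀ A B : Formula, IsPi m A → IsSigma m B → ∃ C, IsSigma m C ∧
      Proves (sigLEM m) ((A.imp B).imp C) ∧ Proves (sigLEM m) (C.imp (A.imp B))) := by
  intro m
  induction m using Nat.strong_induction_on with
  | _ m ih =>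
    match m with
    | 0 =>
        constructor
        · intro A B hA hB
          exact ⟨A.imp B, isQF_isPi ⟨isQF_of_sigma0 hA, isQF_of_pi0 hB⟩,
            Proves.id1, Proves.id1⟩
        · intro A B hA hB
          exact ⟨A.imp B, isQF_isSigma ⟨isQF_of_pi0 hA, isQF_of_sigma0 hB⟩,
            Proves.id1, Proves.id1⟩
    | m + 1 =>
        have innerP : ∀ (n : ℕ) (A B : Formula), A.fsize + B.fsize ≤ n →
            IsSigma (m+1) A → IsPi (m+1) B → ∃ C, IsPi (m+1) C ∧
            Proves (sigLEM (m+1)) ((A.imp B).imp C) ∧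
            Proves (sigLEM (m+1)) (C.imp (A.imp B)) := by
          intro n
          induction n with
          | zero =>
              intro A B hn _ _
              exact absurd hn (by have := Formula.fsize_pos A; have := Formula.fsize_pos B; omega)
          | succ n ihn =>
              intro A B hn hA hB
              by_cases hAex : ∃ A₀, A = Formula.ex A₀
              · obtain ⟨A₀, rfl⟩ := hAex
                have hA₀ : IsSigma (m+1) A₀ := (sigma_ex_inv _ _ hA).2
                obtain ⟨C₀, hC₀, fwd₀, bwd₀⟩ := ihn A₀ (B.lift 0)
                  (by rw [Formula.fsize_lift]; simp [Formula.fsize] at hn ⊢; omega)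
                  hA₀ (hB.lift 0)
                refine ⟨Formula.all C₀, IsPi.all hC₀, ?_, ?_⟩
                · exact Proves.trans Proves.impExL_fwd (Proves.genImp fwd₀)
                · exact Proves.trans (Proves.genImp bwd₀) Proves.impExL_bwd
              · by_cases hBall : ∃ B₀, B = Formula.all B₀
                · obtain ⟨B₀, rfl⟩ := hBall
                  have hB₀ : IsPi (m+1) B₀ := (pi_all_inv _ _ hB).2
                  obtain ⟨C₀, hC₀, fwd₀, bwd₀⟩ := ihn (A.lift 0) B₀
                    (by rw [Formula.fsize_lift]; simp [Formula.fsize] at hn ⊢; omega)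
                    (hA.lift 0) hB₀
                  refine ⟨Formula.all C₀, IsPi.all hC₀, ?_, ?_⟩
                  · exact Proves.trans Proves.impAllR_fwd (Proves.genImp fwd₀)
                  · exact Proves.trans (Proves.genImp bwd₀) Proves.impAllR_bwd
                · have hA' : IsPi m A := sigma_succ_nonex hA (fun β hβ => hAex ⟨β, hβ⟩)
                  have hB' : IsSigma m B := pi_succ_nonall hB (fun β hβ => hBall ⟨β, hβ⟩)
                  obtain ⟨C, hC, fwdv, bwdv⟩ := (vee_merge m).1 A.dual B hA'.dual_sigma hB'
                  refine ⟨C, .ofSigma hC, ?_, ?_⟩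
                  · -- (A→B) → A.dual ∨ B → C
                    have lem : Proves (sigLEM (m+1)) (A.or A.neg) :=
                      proves_sigLEM_mono (by omega) (lem_of_pi hA')
                    have bA : Proves (sigLEM (m+1)) (A.imp ((A.imp B).imp (A.dual.or B))) :=
                      Proves.swap (Proves.leftComp Proves.orR)
                    have bnA : Proves (sigLEM (m+1)) (A.neg.imp ((A.imp B).imp (A.dual.or B))) :=
                      Proves.trans (proves_sigLEM_mono (by omega) (neg_imp_dual (Or.inr hA')))
                        (Proves.trans Proves.orL (Proves.ha (HAAx.axK _ _)))
                    exact Proves.trans ((Proves.orE1 bA bnA).mp lem) (fwdv _)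
                  · exact Proves.trans (proves_sigLEM_mono (by omega) bwdv)
                      (Proves.orE1 (Proves.trans (Proves.dual_imp_neg A) Proves.negElim)
                        (Proves.ha (HAAx.axK B A)))
        have innerS : ∀ (n : ℕ) (A B : Formula), A.fsize + B.fsize ≤ n →
            IsPi (m+1) A → IsSigma (m+1) B → ∃ C, IsSigma (m+1) C ∧
            Proves (sigLEM (m+1)) ((A.imp B).imp C) ∧
            Proves (sigLEM (m+1)) (C.imp (A.imp B)) := by
          intro n
          induction n with
          | zero =>
              intro A B hn _ _
              exact absurd hn (by have := Formula.fsize_pos A; have := Formula.fsize_pos B; omega)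
          | succ n ihn =>
              intro A B hn hA hB
              by_cases hAall : ∃ A₀, A = Formula.all A₀
              · obtain ⟨A₀, rfl⟩ := hAall
                have hA₀ : IsPi (m+1) A₀ := (pi_all_inv _ _ hA).2
                obtain ⟨C₀, hC₀, fwd₀, bwd₀⟩ := ihn A₀ (B.lift 0)
                  (by rw [Formula.fsize_lift]; simp [Formula.fsize] at hn ⊢; omega)
                  hA₀ (hB.lift 0)
                refine ⟨Formula.ex C₀, IsSigma.ex hC₀, ?_, ?_⟩
                · -- (∀A₀ → B) → ∃x(A₀ → B↑) → ∃x C₀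
                  have hE : IsSigma (m+1) (Formula.ex A₀.dual) := IsSigma.ex hA₀.dual_sigma
                  have lem := lem_of_sigma hE
                  have b1 : Proves (sigLEM (m+1)) ((Formula.ex A₀.dual).imp
                      (((Formula.all A₀).imp B).imp (Formula.ex (A₀.imp (B.lift 0))))) :=
                    Proves.trans (Proves.exMono (Proves.trans (Proves.dual_imp_neg A₀)
                      Proves.negElim)) (Proves.ha (HAAx.axK _ _))
                  have bg : Proves (sigLEM (m+1)) (B.imp (Formula.ex (A₀.imp (B.lift 0)))) := by
                    have h := Proves.exI0 (Γ := sigLEM (m+1)) (φ := A₀.imp (B.lift 0)) Term.zero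
                    rw [show Formula.subst 0 Term.zero (A₀.imp (B.lift 0))
                        = (Formula.subst 0 Term.zero A₀).imp B by
                          simp [Formula.subst, Formula.subst_lift]] at h
                    exact Proves.trans (Proves.ha (HAAx.axK B _)) h
                  have t : Proves (sigLEM (m+1)) ((Formula.ex A₀.dual).neg.imp (Formula.all A₀)) :=
                    Proves.trans Proves.negEx_allNeg
                      (Proves.genImp (negdual_imp (Or.inr hA₀)))
                  have b2 : Proves (sigLEM (m+1)) ((Formula.ex A₀.dual).neg.imp
                      (((Formula.all A₀).imp B).imp (Formula.ex (A₀.imp (B.lift 0))))) :=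
                    Proves.mp2 (Proves.k1 (Proves.swap (Proves.leftComp bg))) t
                  exact Proves.trans ((Proves.orE1 b1 b2).mp lem) (Proves.exMono fwd₀)
                · exact Proves.trans (Proves.exMono bwd₀) Proves.impAllL_bwd
              · by_cases hBex : ∃ B₀, B = Formula.ex B₀
                · obtain ⟨B₀, rfl⟩ := hBex
                  have hB₀ : IsSigma (m+1) B₀ := (sigma_ex_inv _ _ hB).2
                  obtain ⟨C₀, hC₀, fwd₀, bwd₀⟩ := ihn (A.lift 0) B₀
                    (by rw [Formula.fsize_lift]; simp [Formula.fsize] at hn ⊢; omega)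
                    (hA.lift 0) hB₀
                  refine ⟨Formula.ex C₀, IsSigma.ex hC₀, ?_, ?_⟩
                  · have lem := lem_of_sigma hB
                    have b1 : Proves (sigLEM (m+1)) ((Formula.ex B₀).imp
                        ((A.imp (Formula.ex B₀)).imp (Formula.ex ((A.lift 0).imp B₀)))) :=
                      Proves.trans (Proves.exMono (Proves.ha (HAAx.axK B₀ (A.lift 0))))
                        (Proves.ha (HAAx.axK _ _))
                    have bg : Proves (sigLEM (m+1))
                        (A.neg.imp (Formula.ex ((A.lift 0).imp B₀))) := by
                      have h := Proves.exI0 (Γ := sigLEM (m+1)) (φ := (A.lift 0).imp B₀) Term.zero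
                      rw [show Formula.subst 0 Term.zero ((A.lift 0).imp B₀)
                          = A.imp (Formula.subst 0 Term.zero B₀) by
                            simp [Formula.subst, Formula.subst_lift]] at h
                      exact Proves.trans (Proves.leftComp Proves.efq1) h
                    have b2 : Proves (sigLEM (m+1)) ((Formula.ex B₀).neg.imp
                        ((A.imp (Formula.ex B₀)).imp (Formula.ex ((A.lift 0).imp B₀)))) :=
                      Proves.mp2 (Proves.k1 (Proves.leftComp bg)) (Proves.swap Proves.ctpObj)
                    exact Proves.trans ((Proves.orE1 b1 b2).mp lem) (Proves.exMono fwd₀)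
                  · exact Proves.trans (Proves.exMono bwd₀) Proves.impExR_bwd
                · have hA' : IsSigma m A := pi_succ_nonall hA (fun β hβ => hAall ⟨β, hβ⟩)
                  have hB' : IsPi m B := sigma_succ_nonex hB (fun β hβ => hBex ⟨β, hβ⟩)
                  obtain ⟨C, hC, fwd, bwd⟩ := (ih m (by omega)).1 A B hA' hB'
                  exact ⟨C, .ofPi hC, proves_sigLEM_mono (by omega) fwd,
                    proves_sigLEM_mono (by omega) bwd⟩
        exact ⟨fun A B hA hB => innerP _ A B le_rfl hA hB,
               fun A B hA hB => innerS _ A B le_rfl hA hB⟩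
/-! ### Alternation paths: the classes U and E as predicates -/

/-- Degree ≤ m and all maximal (length-m) paths begin with `-`. -/
def Up (m : ℕ) (φ : Formula) : Prop :=
  φ.degree ≤ m ∧ ∀ s ∈ φ.alt, s.length = m → m = 0 ∨ s.head? = some false

/-- Degree ≤ m and all maximal (length-m) paths begin with `+`. -/
def Ep (m : ℕ) (φ : Formula) : Prop :=
  φ.degree ≤ m ∧ ∀ s ∈ φ.alt, s.length = m → m = 0 ∨ s.head? = some true

theorem degree_le_iff {φ : Formula} {m : ℕ} :
    φ.degree ≤ m ↔ ∀ s ∈ φ.alt, s.length ≤ m := Finset.sup_le_iff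

theorem len_le_degree {φ : Formula} {s : List Bool} (h : s ∈ φ.alt) :
    s.length ≤ φ.degree := Finset.le_sup h

theorem alt_nonempty : ∀ (φ : Formula), φ.alt.Nonempty := by
  intro φ
  induction φ with
  | falsum => exact ⟨[], by simp [Formula.alt]⟩
  | dollar => exact ⟨[], by simp [Formula.alt]⟩
  | eq t u => exact ⟨[], by simp [Formula.alt]⟩
  | and φ ψ ih1 ih2 => exact ⟨ih1.choose, Finset.mem_union_left _ ih1.choose_spec⟩
  | or φ ψ ih1 ih2 => exact ⟨ih1.choose, Finset.mem_union_left _ ih1.choose_spec⟩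
  | imp φ ψ ih1 ih2 => exact ⟨ih2.choose, Finset.mem_union_right _ ih2.choose_spec⟩
  | all φ ih => exact ih.image _
  | ex φ ih => exact ih.image _

theorem allpath_head {A : Formula} {s : List Bool} (h : s ∈ (Formula.all A).alt) :
    s.head? = some false := by
  simp only [Formula.alt, Finset.mem_image] at h
  obtain ⟨t, _, rfl⟩ := h
  by_cases ht : t.head? = some false
  · simp [ht]
  · simp [ht]

theorem expath_head {A : Formula} {s : List Bool} (h : s ∈ (Formula.ex A).alt) :
    s.head? = some true := by
  simp only [Formula.alt, Finset.mem_image] at h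
  obtain ⟨t, _, rfl⟩ := h
  by_cases ht : t.head? = some true
  · simp [ht]
  · simp [ht]

theorem allpath_pos {A : Formula} {s : List Bool} (h : s ∈ (Formula.all A).alt) :
    1 ≤ s.length := by
  have := allpath_head h
  cases s with
  | nil => simp at this
  | cons a t => simp

theorem expath_pos {A : Formula} {s : List Bool} (h : s ∈ (Formula.ex A).alt) :
    1 ≤ s.length := by
  have := expath_head h
  cases s with
  | nil => simp at this
  | cons a t => simp

theorem one_le_degree_all {A : Formula} : 1 ≤ (Formula.all A).degree := by
  obtain ⟨s, hs⟩ := alt_nonempty (Formula.all A)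
  exact le_trans (allpath_pos hs) (len_le_degree hs)

theorem one_le_degree_ex {A : Formula} : 1 ≤ (Formula.ex A).degree := by
  obtain ⟨s, hs⟩ := alt_nonempty (Formula.ex A)
  exact le_trans (expath_pos hs) (len_le_degree hs)

theorem mem_alt_all_sub {A : Formula} {t : List Bool} (h : t ∈ A.alt) :
    t.length ≤ (Formula.all A).degree ∧
    ((if t.head? = some false then t else false :: t) ∈ (Formula.all A).alt) := by
  have hmem : (if t.head? = some false then t else false :: t) ∈ (Formula.all A).alt := by
    simp only [Formula.alt, Finset.mem_image]
    exact ⟨t, h, rfl⟩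
  refine ⟨?_, hmem⟩
  by_cases ht : t.head? = some false
  · simp only [ht, if_pos] at hmem
    exact len_le_degree (by simpa [ht] using hmem)
  · have := len_le_degree hmem
    simp only [ht, if_neg, List.length_cons] at this
    simp at this ⊢
    omega

theorem mem_alt_ex_sub {A : Formula} {t : List Bool} (h : t ∈ A.alt) :
    t.length ≤ (Formula.ex A).degree ∧
    ((if t.head? = some true then t else true :: t) ∈ (Formula.ex A).alt) := by
  have hmem : (if t.head? = some true then t else true :: t) ∈ (Formula.ex A).alt := by
    simp only [Formula.alt, Finset.mem_image]
    exact ⟨t, h, rfl⟩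
  refine ⟨?_, hmem⟩
  by_cases ht : t.head? = some true
  · simp only [ht, if_pos] at hmem
    exact len_le_degree (by simpa [ht] using hmem)
  · have := len_le_degree hmem
    simp only [ht, if_neg, List.length_cons] at this
    simp at this ⊢
    omega

/-! Destructor lemmas for Up/Ep -/

theorem Up_and {m : ℕ} {A B : Formula} (h : Up m (A.and B)) : Up m A ∧ Up m B := by
  obtain ⟨hd, hp⟩ := h
  rw [degree_le_iff] at hd
  constructor
  · exact ⟨degree_le_iff.2 fun s hs => hd s (Finset.mem_union_left _ hs),
      fun s hs hl => hp s (Finset.mem_union_left _ hs) hl⟩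
  · exact ⟨degree_le_iff.2 fun s hs => hd s (Finset.mem_union_right _ hs),
      fun s hs hl => hp s (Finset.mem_union_right _ hs) hl⟩

theorem Ep_and {m : ℕ} {A B : Formula} (h : Ep m (A.and B)) : Ep m A ∧ Ep m B := by
  obtain ⟨hd, hp⟩ := h
  rw [degree_le_iff] at hd
  constructor
  · exact ⟨degree_le_iff.2 fun s hs => hd s (Finset.mem_union_left _ hs),
      fun s hs hl => hp s (Finset.mem_union_left _ hs) hl⟩
  · exact ⟨degree_le_iff.2 fun s hs => hd s (Finset.mem_union_right _ hs),
      fun s hs hl => hp s (Finset.mem_union_right _ hs) hl⟩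

theorem Up_or {m : ℕ} {A B : Formula} (h : Up m (A.or B)) : Up m A ∧ Up m B := by
  obtain ⟨hd, hp⟩ := h
  rw [degree_le_iff] at hd
  constructor
  · exact ⟨degree_le_iff.2 fun s hs => hd s (Finset.mem_union_left _ hs),
      fun s hs hl => hp s (Finset.mem_union_left _ hs) hl⟩
  · exact ⟨degree_le_iff.2 fun s hs => hd s (Finset.mem_union_right _ hs),
      fun s hs hl => hp s (Finset.mem_union_right _ hs) hl⟩

theorem Ep_or {m : ℕ} {A B : Formula} (h : Ep m (A.or B)) : Ep m A ∧ Ep m B := by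
  obtain ⟨hd, hp⟩ := h
  rw [degree_le_iff] at hd
  constructor
  · exact ⟨degree_le_iff.2 fun s hs => hd s (Finset.mem_union_left _ hs),
      fun s hs hl => hp s (Finset.mem_union_left _ hs) hl⟩
  · exact ⟨degree_le_iff.2 fun s hs => hd s (Finset.mem_union_right _ hs),
      fun s hs hl => hp s (Finset.mem_union_right _ hs) hl⟩

theorem pflip_mem_imp {A B : Formula} {s : List Bool} (hs : s ∈ A.alt) :
    Formula.pflip s ∈ (A.imp B).alt :=
  Finset.mem_union_left _ (Finset.mem_image_of_mem _ hs)

theorem head_of_pflip {s : List Bool} {b : Bool} :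
    (Formula.pflip s).head? = some b ↔ s.head? = some (!b) := by
  cases s with
  | nil => simp [Formula.pflip]
  | cons a t => cases a <;> cases b <;> simp [Formula.pflip]

theorem Up_imp {m : ℕ} {A B : Formula} (h : Up m (A.imp B)) : Ep m A ∧ Up m B := by
  obtain ⟨hd, hp⟩ := h
  rw [degree_le_iff] at hd
  constructor
  · constructor
    · refine degree_le_iff.2 fun s hs => ?_
      have := hd _ (pflip_mem_imp hs)
      simpa [Formula.pflip] using this
    · intro s hs hl
      have h2 := hp _ (pflip_mem_imp hs) (by simpa [Formula.pflip] using hl)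
      rcases h2 with h2 | h2
      · exact Or.inl h2
      · exact Or.inr (by simpa using head_of_pflip.1 h2)
  · exact ⟨degree_le_iff.2 fun s hs => hd s (Finset.mem_union_right _ hs),
      fun s hs hl => hp s (Finset.mem_union_right _ hs) hl⟩

theorem Ep_imp {m : ℕ} {A B : Formula} (h : Ep m (A.imp B)) : Up m A ∧ Ep m B := by
  obtain ⟨hd, hp⟩ := h
  rw [degree_le_iff] at hd
  constructor
  · constructor
    · refine degree_le_iff.2 fun s hs => ?_
      have := hd _ (pflip_mem_imp hs)
      simpa [Formula.pflip] using this
    · intro s hs hl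
      have h2 := hp _ (pflip_mem_imp hs) (by simpa [Formula.pflip] using hl)
      rcases h2 with h2 | h2
      · exact Or.inl h2
      · exact Or.inr (by simpa using head_of_pflip.1 h2)
  · exact ⟨degree_le_iff.2 fun s hs => hd s (Finset.mem_union_right _ hs),
      fun s hs hl => hp s (Finset.mem_union_right _ hs) hl⟩

theorem Up_all {m : ℕ} {A : Formula} (h : Up m (Formula.all A)) : Up m A := by
  obtain ⟨hd, hp⟩ := h
  constructor
  · exact degree_le_iff.2 fun s hs => le_trans (mem_alt_all_sub hs).1 hd
  · intro s hs hl
    by_cases hm : m = 0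
    · exact Or.inl hm
    by_cases hh : s.head? = some false
    · exact Or.inr hh
    · -- then false :: s ∈ alt with length m+1 > m, contradiction
      have hmem := (mem_alt_all_sub hs).2
      rw [if_neg hh] at hmem
      have := len_le_degree hmem
      rw [List.length_cons, hl] at this
      omega

theorem Ep_ex {m : ℕ} {A : Formula} (h : Ep m (Formula.ex A)) : Ep m A := by
  obtain ⟨hd, hp⟩ := h
  constructor
  · exact degree_le_iff.2 fun s hs => le_trans (mem_alt_ex_sub hs).1 hd
  · intro s hs hl
    by_cases hm : m = 0
    · exact Or.inl hm
    by_cases hh : s.head? = some true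
    · exact Or.inr hh
    · have hmem := (mem_alt_ex_sub hs).2
      rw [if_neg hh] at hmem
      have := len_le_degree hmem
      rw [List.length_cons, hl] at this
      omega

theorem Ep_all {m : ℕ} {A : Formula} (h : Ep m (Formula.all A)) :
    1 ≤ m ∧ Up (m-1) (Formula.all A) := by
  obtain ⟨hd, hp⟩ := h
  have hm : 1 ≤ m := le_trans one_le_degree_all hd
  have hdeg : (Formula.all A).degree ≤ m - 1 := by
    refine degree_le_iff.2 fun s hs => ?_
    have h1 := len_le_degree hs
    have hne : s.length ≠ m := by
      intro hl
      rcases hp s hs hl with h2 | h2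
      · omega
      · rw [allpath_head hs] at h2; simp at h2
    omega
  exact ⟨hm, hdeg, fun s hs hl => Or.inr (allpath_head hs)⟩

theorem Up_ex {m : ℕ} {A : Formula} (h : Up m (Formula.ex A)) :
    1 ≤ m ∧ Ep (m-1) (Formula.ex A) := by
  obtain ⟨hd, hp⟩ := h
  have hm : 1 ≤ m := le_trans one_le_degree_ex hd
  have hdeg : (Formula.ex A).degree ≤ m - 1 := by
    refine degree_le_iff.2 fun s hs => ?_
    have h1 := len_le_degree hs
    have hne : s.length ≠ m := by
      intro hl
      rcases hp s hs hl with h2 | h2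
      · omega
      · rw [expath_head hs] at h2; simp at h2
    omega
  exact ⟨hm, hdeg, fun s hs hl => Or.inr (expath_head hs)⟩

theorem degree_atom_eq {φ : Formula} (h : φ.alt = {([] : List Bool)}) : φ.degree = 0 := by
  simp [Formula.degree, h]
/-! ### Degree-zero formulas are quantifier-free -/

theorem degree_and_left {A B : Formula} : A.degree ≤ (A.and B).degree :=
  degree_le_iff.2 fun s hs => len_le_degree (Finset.mem_union_left _ hs)
theorem degree_and_right {A B : Formula} : B.degree ≤ (A.and B).degree :=
  degree_le_iff.2 fun s hs => len_le_degree (Finset.mem_union_right _ hs)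
theorem degree_or_left {A B : Formula} : A.degree ≤ (A.or B).degree :=
  degree_le_iff.2 fun s hs => len_le_degree (Finset.mem_union_left _ hs)
theorem degree_or_right {A B : Formula} : B.degree ≤ (A.or B).degree :=
  degree_le_iff.2 fun s hs => len_le_degree (Finset.mem_union_right _ hs)
theorem degree_imp_left {A B : Formula} : A.degree ≤ (A.imp B).degree :=
  degree_le_iff.2 fun s hs => by
    have := len_le_degree (pflip_mem_imp (B := B) hs)
    simpa [Formula.pflip] using this
theorem degree_imp_right {A B : Formula} : B.degree ≤ (A.imp B).degree :=
  degree_le_iff.2 fun s hs => len_le_degree (Finset.mem_union_right _ hs)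

theorem deg0_qf : ∀ (φ : Formula), φ.noDollar → φ.degree = 0 → φ.isQF := by
  intro φ
  induction φ with
  | falsum => intro _ _; trivial
  | dollar => intro h _; exact h.elim
  | eq t u => intro _ _; trivial
  | and A B ih1 ih2 =>
      intro hnd hdeg
      exact ⟨ih1 hnd.1 (by have := degree_and_left (A := A) (B := B); omega),
             ih2 hnd.2 (by have := degree_and_right (A := A) (B := B); omega)⟩
  | or A B ih1 ih2 =>
      intro hnd hdeg
      exact ⟨ih1 hnd.1 (by have := degree_or_left (A := A) (B := B); omega),
             ih2 hnd.2 (by have := degree_or_right (A := A) (B := B); omega)⟩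
  | imp A B ih1 ih2 =>
      intro hnd hdeg
      exact ⟨ih1 hnd.1 (by have := degree_imp_left (A := A) (B := B); omega),
             ih2 hnd.2 (by have := degree_imp_right (A := A) (B := B); omega)⟩
  | all A ih =>
      intro _ hdeg
      exact absurd hdeg (by have := one_le_degree_all (A := A); omega)
  | ex A ih =>
      intro _ hdeg
      exact absurd hdeg (by have := one_le_degree_ex (A := A); omega)

/-! ### The prenex normal form theorem -/

theorem Proves.impMono {Γ : Set Formula} {A B C D : Formula}
    (p : Proves Γ (C.imp A)) (q : Proves Γ (B.imp D)) :
    Proves Γ ((A.imp B).imp (C.imp D)) :=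
  Proves.trans (Proves.rightComp p) (Proves.leftComp q)

theorem prenex : ∀ (m : ℕ) (φ : Formula), φ.noDollar →
    (Ep m φ → ∃ C, IsSigma m C ∧
      Proves (sigLEM m) (φ.imp C) ∧ Proves (sigLEM m) (C.imp φ)) ∧
    (Up m φ → ∃ C, IsPi m C ∧
      Proves (sigLEM m) (φ.imp C) ∧ Proves (sigLEM m) (C.imp φ)) := by
  intro m
  induction m using Nat.strong_induction_on with
  | _ m ihm =>
    intro φ
    induction φ with
    | falsum =>
        intro _
        exact ⟨fun _ => ⟨Formula.falsum, isQF_isSigma trivial, Proves.id1, Proves.id1⟩,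
               fun _ => ⟨Formula.falsum, isQF_isPi trivial, Proves.id1, Proves.id1⟩⟩
    | dollar => intro h; exact h.elim
    | eq t u =>
        intro _
        exact ⟨fun _ => ⟨Formula.eq t u, isQF_isSigma trivial, Proves.id1, Proves.id1⟩,
               fun _ => ⟨Formula.eq t u, isQF_isPi trivial, Proves.id1, Proves.id1⟩⟩
    | and A B ih1 ih2 =>
        intro hnd
        constructor
        · intro hE
          obtain ⟨hEA, hEB⟩ := Ep_and hE
          obtain ⟨CA, hCA, fA, bA⟩ := (ih1 hnd.1).1 hEA
          obtain ⟨CB, hCB, fB, bB⟩ := (ih2 hnd.2).1 hEB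
          obtain ⟨C, hC, fw, bw⟩ := (wedge_merge m).1 CA CB hCA hCB
          exact ⟨C, hC, Proves.trans (Proves.andMono fA fB) (fw _),
            Proves.trans (bw _) (Proves.andMono bA bB)⟩
        · intro hU
          obtain ⟨hUA, hUB⟩ := Up_and hU
          obtain ⟨CA, hCA, fA, bA⟩ := (ih1 hnd.1).2 hUA
          obtain ⟨CB, hCB, fB, bB⟩ := (ih2 hnd.2).2 hUB
          obtain ⟨C, hC, fw, bw⟩ := (wedge_merge m).2 CA CB hCA hCB
          exact ⟨C, hC, Proves.trans (Proves.andMono fA fB) (fw _),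
            Proves.trans (bw _) (Proves.andMono bA bB)⟩
    | or A B ih1 ih2 =>
        intro hnd
        constructor
        · intro hE
          obtain ⟨hEA, hEB⟩ := Ep_or hE
          obtain ⟨CA, hCA, fA, bA⟩ := (ih1 hnd.1).1 hEA
          obtain ⟨CB, hCB, fB, bB⟩ := (ih2 hnd.2).1 hEB
          obtain ⟨C, hC, fw, bw⟩ := (vee_merge m).1 CA CB hCA hCB
          exact ⟨C, hC, Proves.trans (Proves.orMono fA fB) (fw _),
            Proves.trans bw (Proves.orMono bA bB)⟩
        · intro hU
          obtain ⟨hUA, hUB⟩ := Up_or hU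
          obtain ⟨CA, hCA, fA, bA⟩ := (ih1 hnd.1).2 hUA
          obtain ⟨CB, hCB, fB, bB⟩ := (ih2 hnd.2).2 hUB
          obtain ⟨C, hC, fw, bw⟩ := (vee_merge m).2 CA CB hCA hCB
          exact ⟨C, hC, Proves.trans (Proves.orMono fA fB) (fw _),
            Proves.trans bw (Proves.orMono bA bB)⟩
    | imp A B ih1 ih2 =>
        intro hnd
        constructor
        · intro hE
          obtain ⟨hUA, hEB⟩ := Ep_imp hE
          obtain ⟨CA, hCA, fA, bA⟩ := (ih1 hnd.1).2 hUA
          obtain ⟨CB, hCB, fB, bB⟩ := (ih2 hnd.2).1 hEB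
          obtain ⟨C, hC, fw, bw⟩ := (imp_prenex m).2 CA CB hCA hCB
          exact ⟨C, hC, Proves.trans (Proves.impMono bA fB) fw,
            Proves.trans bw (Proves.impMono fA bB)⟩
        · intro hU
          obtain ⟨hEA, hUB⟩ := Up_imp hU
          obtain ⟨CA, hCA, fA, bA⟩ := (ih1 hnd.1).1 hEA
          obtain ⟨CB, hCB, fB, bB⟩ := (ih2 hnd.2).2 hUB
          obtain ⟨C, hC, fw, bw⟩ := (imp_prenex m).1 CA CB hCA hCB
          exact ⟨C, hC, Proves.trans (Proves.impMono bA fB) fw,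
            Proves.trans bw (Proves.impMono fA bB)⟩
    | all A ih =>
        intro hnd
        constructor
        · intro hE
          obtain ⟨hm, hU'⟩ := Ep_all hE
          obtain ⟨C, hC, fw, bw⟩ := (ihm (m-1) (by omega) (Formula.all A) hnd).2 hU'
          obtain ⟨m', rfl⟩ : ∃ m', m = m' + 1 := ⟨m - 1, by omega⟩
          refine ⟨C, ?_, proves_sigLEM_mono (by omega) fw, proves_sigLEM_mono (by omega) bw⟩
          have : m' + 1 - 1 = m' := by omega
          rw [this] at hC
          exact .ofPi hC
        · intro hU
          have hUA := Up_all hU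
          obtain ⟨CA, hCA, fA, bA⟩ := (ih hnd).2 hUA
          obtain ⟨m', rfl⟩ : ∃ m', m = m' + 1 :=
            ⟨m - 1, by have := le_trans one_le_degree_all hU.1; omega⟩
          exact ⟨Formula.all CA, IsPi.all hCA, Proves.genImp fA, Proves.genImp bA⟩
    | ex A ih =>
        intro hnd
        constructor
        · intro hE
          have hEA := Ep_ex hE
          obtain ⟨CA, hCA, fA, bA⟩ := (ih hnd).1 hEA
          obtain ⟨m', rfl⟩ : ∃ m', m = m' + 1 :=
            ⟨m - 1, by have := le_trans one_le_degree_ex hE.1; omega⟩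
          exact ⟨Formula.ex CA, IsSigma.ex hCA, Proves.exMono fA, Proves.exMono bA⟩
        · intro hU
          obtain ⟨hm, hE'⟩ := Up_ex hU
          obtain ⟨C, hC, fw, bw⟩ := (ihm (m-1) (by omega) (Formula.ex A) hnd).1 hE'
          obtain ⟨m', rfl⟩ : ∃ m', m = m' + 1 := ⟨m - 1, by omega⟩
          refine ⟨C, ?_, proves_sigLEM_mono (by omega) fw, proves_sigLEM_mono (by omega) bw⟩
          have : m' + 1 - 1 = m' := by omega
          rw [this] at hC
          exact .ofSigma hC
/-! ### More object-level combinators -/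

namespace Proves

variable {Γ : Set Formula} {φ ψ χ A B B₁ B₂ : Formula}

theorem leftCompObj : Proves Γ ((ψ.imp χ).imp ((φ.imp ψ).imp (φ.imp χ))) :=
  Proves.trans (Proves.ha (HAAx.axK (ψ.imp χ) φ)) (Proves.ha (HAAx.axS φ ψ χ))

theorem rightCompObj : Proves Γ ((φ.imp ψ).imp ((ψ.imp χ).imp (φ.imp χ))) :=
  Proves.swap leftCompObj

theorem negImpObj : Proves Γ ((φ.and ψ.neg).imp (φ.imp ψ).neg) := by
  have b : Proves Γ ((φ.imp ψ).imp ((φ.and ψ.neg).imp ψ)) := rightComp andL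
  have a2 : Proves Γ ((φ.imp ψ).imp ((φ.and ψ.neg).imp ψ.neg)) := k1 andR
  exact swap (mp2 (mp2 (k1 (Proves.ha (HAAx.axS (φ.and ψ.neg) ψ Formula.falsum))) a2) b)

theorem andOrDistR_fwd :
    Proves Γ ((A.and (B₁.or B₂)).imp ((A.and B₁).or (A.and B₂))) :=
  uncurry (swap (orE1 (swap (curry orL)) (swap (curry orR))))

theorem andOrDistR_bwd :
    Proves Γ (((A.and B₁).or (A.and B₂)).imp (A.and (B₁.or B₂))) :=
  orE1 (andMono id1 orL) (andMono id1 orR)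

theorem andOrDistL_fwd :
    Proves Γ (((B₁.or B₂).and A).imp ((B₁.and A).or (B₂.and A))) :=
  uncurry (orE1 (curry orL) (curry orR))

theorem andOrDistL_bwd :
    Proves Γ (((B₁.and A).or (B₂.and A)).imp ((B₁.or B₂).and A)) :=
  orE1 (andMono orL id1) (andMono orR id1)

theorem negAndObj : Proves Γ ((φ.neg.and ψ.neg).imp (φ.or ψ).neg) :=
  swap (orE1 (swap andL) (swap andR))

end Proves

/-! ### EPi closure lemmas -/

theorem EPi.lift {K : ℕ} {φ : Formula} (h : EPi K φ) (d : ℕ) : EPi K (φ.lift d) := by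
  induction h generalizing d with
  | ofPi h => exact .ofPi (h.lift d)
  | or _ _ ih1 ih2 => exact .or (ih1 d) (ih2 d)
  | all _ ih => exact .all (ih (d+1))

/-- Conjunction of a `Π` formula with an `EPi` formula, up to HA-provable equivalence. -/
theorem conj_pi_epi {K : ℕ} : ∀ {B' : Formula}, EPi K B' → ∀ A' : Formula, IsPi K A' →
    ∃ C, EPi K C ∧ (∀ Γ, Proves Γ ((A'.and B').imp C)) ∧
      (∀ Γ, Proves Γ (C.imp (A'.and B'))) := by
  intro B' h
  induction h with
  | ofPi hB =>
      intro A' hA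
      obtain ⟨C, hC, fw, bw⟩ := (wedge_merge K).2 A' _ hA hB
      exact ⟨C, .ofPi hC, fw, bw⟩
  | or h1 h2 ih1 ih2 =>
      intro A' hA
      obtain ⟨C₁, hC₁, f₁, b₁⟩ := ih1 A' hA
      obtain ⟨C₂, hC₂, f₂, b₂⟩ := ih2 A' hA
      refine ⟨C₁.or C₂, .or hC₁ hC₂, fun Γ => ?_, fun Γ => ?_⟩
      · exact Proves.trans Proves.andOrDistR_fwd (Proves.orMono (f₁ Γ) (f₂ Γ))
      · exact Proves.trans (Proves.orMono (b₁ Γ) (b₂ Γ)) Proves.andOrDistR_bwd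
  | all h ih =>
      intro A' hA
      obtain ⟨C₀, hC₀, f₀, b₀⟩ := ih (A'.lift 0) (hA.lift 0)
      refine ⟨Formula.all C₀, .all hC₀, fun Γ => ?_, fun Γ => ?_⟩
      · exact Proves.trans Proves.andAllR_fwd (Proves.genImp (f₀ Γ))
      · exact Proves.trans (Proves.genImp (b₀ Γ)) Proves.andAllR_bwd

/-- Conjunction of two `EPi` formulas, up to HA-provable equivalence. -/
theorem conj_epi {K : ℕ} : ∀ {A' : Formula}, EPi K A' → ∀ {B' : Formula}, EPi K B' →
    ∃ C, EPi K C ∧ (∀ Γ, Proves Γ ((A'.and B').imp C)) ∧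
      (∀ Γ, Proves Γ (C.imp (A'.and B'))) := by
  intro A' h
  induction h with
  | ofPi hA => intro B' hB; exact conj_pi_epi hB _ hA
  | or h1 h2 ih1 ih2 =>
      intro B' hB
      obtain ⟨C₁, hC₁, f₁, b₁⟩ := ih1 hB
      obtain ⟨C₂, hC₂, f₂, b₂⟩ := ih2 hB
      refine ⟨C₁.or C₂, .or hC₁ hC₂, fun Γ => ?_, fun Γ => ?_⟩
      · exact Proves.trans Proves.andOrDistL_fwd (Proves.orMono (f₁ Γ) (f₂ Γ))
      · exact Proves.trans (Proves.orMono (b₁ Γ) (b₂ Γ)) Proves.andOrDistL_bwd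
  | all h ih =>
      intro B' hB
      obtain ⟨C₀, hC₀, f₀, b₀⟩ := ih (hB.lift 0)
      refine ⟨Formula.all C₀, .all hC₀, fun Γ => ?_, fun Γ => ?_⟩
      · exact Proves.trans Proves.andAllL_fwd (Proves.genImp (f₀ Γ))
      · exact Proves.trans (Proves.genImp (b₀ Γ)) Proves.andAllL_bwd
/-! ### The main transformation: U_{k+1} formulas have EΠ_{k+1} forms -/

theorem main_R (k : ℕ) : ∀ (φ : Formula), φ.noDollar →
    (Up (k+1) φ → ∃ C, EPi (k+1) C ∧
        Proves (sigLEM k) (C.imp φ) ∧ Proves lemSet (φ.imp C)) ∧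
    (Ep (k+1) φ → ∃ N, EPi (k+1) N ∧
        Proves (sigLEM k) (N.imp φ.neg) ∧ Proves lemSet (φ.neg.imp N)) := by
  intro φ
  induction φ with
  | falsum =>
      intro _
      constructor
      · intro _
        exact ⟨Formula.falsum, .ofPi (isQF_isPi trivial), Proves.id1, Proves.id1⟩
      · intro _
        exact ⟨Formula.falsum.neg, .ofPi (isQF_isPi ⟨trivial, trivial⟩),
          Proves.id1, Proves.id1⟩
  | dollar => intro h; exact h.elim
  | eq t u =>
      intro _
      constructor
      · intro _
        exact ⟨Formula.eq t u, .ofPi (isQF_isPi trivial), Proves.id1, Proves.id1⟩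
      · intro _
        exact ⟨(Formula.eq t u).neg, .ofPi (isQF_isPi ⟨trivial, trivial⟩),
          Proves.id1, Proves.id1⟩
  | and A B ih1 ih2 =>
      intro hnd
      constructor
      · intro hU
        obtain ⟨hUA, hUB⟩ := Up_and hU
        obtain ⟨CA, hCA, sA, pA⟩ := (ih1 hnd.1).1 hUA
        obtain ⟨CB, hCB, sB, pB⟩ := (ih2 hnd.2).1 hUB
        obtain ⟨C, hC, cf, cb⟩ := conj_epi hCA hCB
        exact ⟨C, hC, Proves.trans (cb _) (Proves.andMono sA sB),
          Proves.trans (Proves.andMono pA pB) (cf _)⟩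
      · intro hE
        obtain ⟨hEA, hEB⟩ := Ep_and hE
        obtain ⟨NA, hNA, sA, pA⟩ := (ih1 hnd.1).2 hEA
        obtain ⟨NB, hNB, sB, pB⟩ := (ih2 hnd.2).2 hEB
        refine ⟨NA.or NB, .or hNA hNB, ?_, ?_⟩
        · exact Proves.orE1 (Proves.trans sA (Proves.contrapose1 Proves.andL))
            (Proves.trans sB (Proves.contrapose1 Proves.andR))
        · -- classical: ¬(A∧B) → NA ∨ NB
          have u : Proves lemSet (A.imp (B.imp (A.and B))) := Proves.ha (HAAx.andI A B)
          have rc : Proves lemSet ((B.imp (A.and B)).imp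
              (((A.and B).neg).imp B.neg)) := Proves.rightCompObj
          have t : Proves lemSet (A.imp (((A.and B).neg).imp B.neg)) := Proves.trans u rc
          have cont : Proves lemSet ((((A.and B).neg).imp B.neg).imp
              (((A.and B).neg).imp (NA.or NB))) := Proves.leftComp (Proves.trans pB Proves.orR)
          have b1 : Proves lemSet (A.imp (((A.and B).neg).imp (NA.or NB))) :=
            Proves.trans t cont
          have b2 : Proves lemSet (A.neg.imp (((A.and B).neg).imp (NA.or NB))) :=
            Proves.trans pA (Proves.trans Proves.orL (Proves.ha (HAAx.axK _ _)))
          exact (Proves.orE1 b1 b2).mp (lem_of_noDollar hnd.1)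
  | or A B ih1 ih2 =>
      intro hnd
      constructor
      · intro hU
        obtain ⟨hUA, hUB⟩ := Up_or hU
        obtain ⟨CA, hCA, sA, pA⟩ := (ih1 hnd.1).1 hUA
        obtain ⟨CB, hCB, sB, pB⟩ := (ih2 hnd.2).1 hUB
        exact ⟨CA.or CB, .or hCA hCB, Proves.orMono sA sB, Proves.orMono pA pB⟩
      · intro hE
        obtain ⟨hEA, hEB⟩ := Ep_or hE
        obtain ⟨NA, hNA, sA, pA⟩ := (ih1 hnd.1).2 hEA
        obtain ⟨NB, hNB, sB, pB⟩ := (ih2 hnd.2).2 hEB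
        obtain ⟨C, hC, cf, cb⟩ := conj_epi hNA hNB
        refine ⟨C, hC, ?_, ?_⟩
        · exact Proves.trans (cb _) (Proves.trans (Proves.andMono sA sB) Proves.negAndObj)
        · exact Proves.trans (Proves.andI2 (Proves.trans (Proves.contrapose1 Proves.orL) pA)
            (Proves.trans (Proves.contrapose1 Proves.orR) pB)) (cf _)
  | imp A B ih1 ih2 =>
      intro hnd
      constructor
      · intro hU
        obtain ⟨hEA, hUB⟩ := Up_imp hU
        obtain ⟨NA, hNA, sA, pA⟩ := (ih1 hnd.1).2 hEA
        obtain ⟨CB, hCB, sB, pB⟩ := (ih2 hnd.2).1 hUB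
        refine ⟨NA.or CB, .or hNA hCB, ?_, ?_⟩
        · exact Proves.orE1 (Proves.trans sA Proves.negElim)
            (Proves.trans sB (Proves.ha (HAAx.axK B A)))
        · have b1 : Proves lemSet (A.imp ((A.imp B).imp (NA.or CB))) :=
            Proves.swap (Proves.leftComp (Proves.trans pB Proves.orR))
          have b2 : Proves lemSet (A.neg.imp ((A.imp B).imp (NA.or CB))) :=
            Proves.trans pA (Proves.trans Proves.orL (Proves.ha (HAAx.axK _ _)))
          exact (Proves.orE1 b1 b2).mp (lem_of_noDollar hnd.1)
      · intro hE
        obtain ⟨hUA, hEB⟩ := Ep_imp hE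
        obtain ⟨CA, hCA, sA, pA⟩ := (ih1 hnd.1).1 hUA
        obtain ⟨NB, hNB, sB, pB⟩ := (ih2 hnd.2).2 hEB
        obtain ⟨C, hC, cf, cb⟩ := conj_epi hCA hNB
        refine ⟨C, hC, ?_, ?_⟩
        · exact Proves.trans (cb _)
            (Proves.trans (Proves.andMono sA sB) Proves.negImpObj)
        · have step1 : Proves lemSet (((A.imp B).neg).imp A) :=
            (Proves.orE1 (Proves.ha (HAAx.axK A ((A.imp B).neg)))
              (Proves.trans Proves.negElim (Proves.swap Proves.negElim))).mp
              (lem_of_noDollar hnd.1)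
          have step2 : Proves lemSet (((A.imp B).neg).imp B.neg) :=
            Proves.contrapose1 (Proves.ha (HAAx.axK B A))
          exact Proves.trans (Proves.andI2 step1 step2)
            (Proves.trans (Proves.andMono pA pB) (cf _))
  | all A ih =>
      intro hnd
      constructor
      · intro hU
        have hUA := Up_all hU
        obtain ⟨CA, hCA, sA, pA⟩ := (ih hnd).1 hUA
        exact ⟨Formula.all CA, .all hCA, Proves.genImp sA, Proves.genImp pA⟩
      · intro hE
        obtain ⟨_, hU'⟩ := Ep_all hE
        have hU'' : Up k (Formula.all A) := by simpa using hU'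
        obtain ⟨P, hP, fw, bw⟩ := (prenex k (Formula.all A) hnd).2 hU''
        refine ⟨P.dual, .ofPi (.ofSigma hP.dual_sigma), ?_, ?_⟩
        · exact Proves.trans (Proves.dual_imp_neg P) (Proves.contrapose1 fw)
        · exact proves_sigLEM_lemSet
            (Proves.trans (Proves.contrapose1 bw) (neg_imp_dual (Or.inr hP)))
  | ex A ih =>
      intro hnd
      constructor
      · intro hU
        obtain ⟨_, hE'⟩ := Up_ex hU
        have hE'' : Ep k (Formula.ex A) := by simpa using hE'
        obtain ⟨C, hC, fw, bw⟩ := (prenex k (Formula.ex A) hnd).1 hE''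
        exact ⟨C, .ofPi (.ofSigma hC), bw, proves_sigLEM_lemSet fw⟩
      · intro hE
        have hEA := Ep_ex hE
        obtain ⟨NA, hNA, sA, pA⟩ := (ih hnd).2 hEA
        refine ⟨Formula.all NA, .all hNA, ?_, ?_⟩
        · exact Proves.trans (Proves.genImp sA) Proves.allNeg_negEx
        · exact Proves.trans Proves.negEx_allNeg (Proves.genImp pA)
/-- if `PA + X` is `EΠ_{k+1}`-conservative over `T + X`,
then it is `U_{k+1}`-conservative over `T + X`. -/
theorem u_conservative_of_ePi_conservative (k : ℕ) (T X : Set Formula)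
    (hX : ∀ ψ ∈ X, ψ.noDollar ∧ ψ.sentence)
    (hcons : ∀ φ : Formula, EPi (k + 1) φ →
      Proves (lemSet ∪ X) φ → Proves (T ∪ X) φ) :
    ∀ φ : Formula, φ.noDollar → φ.inU (k + 1) →
      Proves (lemSet ∪ X) φ → Proves (T ∪ X) φ := by
  intro φ hnd hU hprov
  have hU' : Up (k+1) φ := ⟨le_of_eq hU.1, hU.2⟩
  obtain ⟨C, hC, hS, hPA⟩ := (main_R k φ hnd).1 hU'
  have h1 : Proves (lemSet ∪ X) C :=
    (Proves.mono hPA Set.subset_union_left).mp hprov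
  have h2 : Proves (T ∪ X) C := hcons C hC h1
  have hsig : ∀ ψ ∈ sigLEM k, Proves (T ∪ X) ψ := by
    rintro _ ⟨ψ, hψ, rfl⟩
    have hclass : EPi (k+1) (ψ.or ψ.dual) :=
      .or (.ofPi (.ofSigma hψ)) (.ofPi (hψ.dual_pi.mono (Nat.le_succ k)))
    have hprov' : Proves (lemSet ∪ X) (ψ.or ψ.dual) := by
      have lem : Proves lemSet (ψ.or ψ.neg) := lem_of_noDollar hψ.noDollar
      have nd : Proves lemSet (ψ.neg.imp ψ.dual) :=
        proves_sigLEM_lemSet (neg_imp_dual (Or.inl hψ))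
      exact Proves.mono ((Proves.orMono Proves.id1 nd).mp lem) Set.subset_union_left
    have h3 := hcons _ hclass hprov'
    exact (Proves.orMono Proves.id1 (Proves.dual_imp_neg ψ)).mp h3
  exact (hS.transfer hsig).mp h2

end SemiClassicalArith
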